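/- arXiv:2511.14200 — 3 statements merged into one kernel-verified Lean document; each statement's English description precedes it below -/
import Mathlib

section
/- For p' = 1/2 and any p ∈ [0,1] with p ≠ 1/2, the process (|U_n^{p'}|)_{n≥0} is stochastically smaller than (|U_n^{p}|)_{n≥0}. Consequently, (|U_n^{p}|)_{n≥0} is stochastically minimized over p ∈ [0,1] by p = 1/2. -/
open MeasureTheory ProbabilityTheory Finset

/-- The distribution of a single increment of the Bernoulli random walk:
`+1` with probability `p` and `-1` with probability `1 - p`. -/
noncomputable def stepDist (p : ℝ) : Measure ℝ :=
  ENNReal.ofReal p • Measure.dirac 1 + ENNReal.ofReal (1 - p) • Measure.dirac (-1)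

open scoped ENNReal Classical

namespace HalfWalkAux

lemma cons_le_cons {N : ℕ} {c c' : ℝ} (hc : c ≤ c') {v v' : Fin N → ℝ} (hv : v ≤ v') :
    (Fin.cons c v : Fin (N+1) → ℝ) ≤ (Fin.cons c' v' : Fin (N+1) → ℝ) := by
  intro i
  refine Fin.cases ?_ ?_ i
  · simpa using hc
  · intro j; simpa using hv j

noncomputable section

/-- Expected value of `g` applied to the next `N` positions of the reflected symmetric
simple random walk started at `k`. -/
def refV : (N : ℕ) → ℕ → ((Fin N → ℝ) → ℝ) → ℝ
  | 0, _, g => g (fun i => i.elim0)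
  | (N+1), k, g =>
    if k = 0 then refV N 1 (fun v => g (Fin.cons ((1:ℕ):ℝ) v))
    else (1/2) * refV N (k+1) (fun v => g (Fin.cons (((k+1:ℕ)):ℝ) v))
       + (1/2) * refV N (k-1) (fun v => g (Fin.cons (((k-1:ℕ)):ℝ) v))

/-- Expected value of `g` applied to the next `N` absolute positions of the `p`-biased
walk started at `z`. -/
def biasV (p q : ℝ) : (N : ℕ) → ℤ → ((Fin N → ℝ) → ℝ) → ℝ
  | 0, _, g => g (fun i => i.elim0)
  | (N+1), z, g =>
      p * biasV p q N (z+1) (fun v => g (Fin.cons ((|z+1| : ℤ) : ℝ) v))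
    + q * biasV p q N (z-1) (fun v => g (Fin.cons ((|z-1| : ℤ) : ℝ) v))

lemma refV_zero (k : ℕ) (g : (Fin 0 → ℝ) → ℝ) : refV 0 k g = g (fun i => i.elim0) := rfl

lemma refV_succ_zero {N : ℕ} (g : (Fin (N+1) → ℝ) → ℝ) :
    refV (N+1) 0 g = refV N 1 (fun v => g (Fin.cons ((1:ℕ):ℝ) v)) := by
  rw [refV]; simp

lemma refV_succ {N : ℕ} (k : ℕ) (hk : k ≠ 0) (g : (Fin (N+1) → ℝ) → ℝ) :
    refV (N+1) k g = (1/2) * refV N (k+1) (fun v => g (Fin.cons (((k+1:ℕ)):ℝ) v))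
       + (1/2) * refV N (k-1) (fun v => g (Fin.cons (((k-1:ℕ)):ℝ) v)) := by
  rw [refV]; rw [if_neg hk]

lemma biasV_zero (p q : ℝ) (z : ℤ) (g : (Fin 0 → ℝ) → ℝ) :
    biasV p q 0 z g = g (fun i => i.elim0) := rfl

lemma biasV_succ (p q : ℝ) {N : ℕ} (z : ℤ) (g : (Fin (N+1) → ℝ) → ℝ) :
    biasV p q (N+1) z g =
      p * biasV p q N (z+1) (fun v => g (Fin.cons ((|z+1| : ℤ) : ℝ) v))
    + q * biasV p q N (z-1) (fun v => g (Fin.cons ((|z-1| : ℤ) : ℝ) v)) := by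
  rw [biasV]

lemma refV_mono_g : ∀ {N : ℕ} (k : ℕ) {g g' : (Fin N → ℝ) → ℝ},
    (∀ v, g v ≤ g' v) → refV N k g ≤ refV N k g'
  | 0, k, g, g', h => h _
  | (N+1), k, g, g', h => by
    by_cases hk : k = 0
    · subst hk
      rw [refV_succ_zero, refV_succ_zero]
      exact refV_mono_g 1 (fun v => h _)
    · rw [refV_succ k hk, refV_succ k hk]
      have h1 := refV_mono_g (N := N) (k+1) (fun v => h (Fin.cons (((k+1:ℕ)):ℝ) v))
      have h2 := refV_mono_g (N := N) (k-1) (fun v => h (Fin.cons (((k-1:ℕ)):ℝ) v))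
      nlinarith

lemma refV_le_shift : ∀ {N : ℕ} (k : ℕ) {g g' : (Fin N → ℝ) → ℝ},
    (∀ v, g v ≤ g' v) → Monotone g' → refV N k g ≤ refV N (k+2) g'
  | 0, k, g, g', h, _ => h _
  | (N+1), k, g, g', h, hg' => by
    have hmono : ∀ (c : ℕ), Monotone (fun v => g' (Fin.cons ((c:ℕ):ℝ) v)) := by
      intro c v v' hv; exact hg' (cons_le_cons le_rfl hv)
    have hle : ∀ (c c' : ℕ), c ≤ c' → ∀ v,
        g (Fin.cons ((c:ℕ):ℝ) v) ≤ g' (Fin.cons ((c':ℕ):ℝ) v) := by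
      intro c c' hcc v
      exact le_trans (h _) (hg' (cons_le_cons (by exact_mod_cast hcc) le_rfl))
    by_cases hk : k = 0
    · subst hk
      rw [refV_succ_zero, refV_succ (0+2) (by omega)]
      have key1 : refV N 1 (fun v => g (Fin.cons ((1:ℕ):ℝ) v))
          ≤ refV N (1+2) (fun v => g' (Fin.cons (((0+2+1:ℕ)):ℝ) v)) :=
        refV_le_shift 1 (by exact hle 1 (0+2+1) (by omega)) (hmono _)
      have key2 : refV N 1 (fun v => g (Fin.cons ((1:ℕ):ℝ) v))
          ≤ refV N (0+2-1) (fun v => g' (Fin.cons (((0+2-1:ℕ)):ℝ) v)) :=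
        refV_mono_g _ (by exact hle 1 (0+2-1) (by omega))
      norm_num at key1 key2 ⊢
      nlinarith
    · rw [refV_succ k hk, refV_succ (k+2) (by omega)]
      have key1 : refV N (k+1) (fun v => g (Fin.cons (((k+1:ℕ)):ℝ) v))
          ≤ refV N ((k+1)+2) (fun v => g' (Fin.cons (((k+2+1:ℕ)):ℝ) v)) := by
        have := refV_le_shift (N := N) (k+1)
          (g := fun v => g (Fin.cons (((k+1:ℕ)):ℝ) v))
          (g' := fun v => g' (Fin.cons (((k+2+1:ℕ)):ℝ) v))
          (by exact hle (k+1) (k+2+1) (by omega)) (hmono _)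
        exact this
      have key2 : refV N (k-1) (fun v => g (Fin.cons (((k-1:ℕ)):ℝ) v))
          ≤ refV N ((k-1)+2) (fun v => g' (Fin.cons (((k+2-1:ℕ)):ℝ) v)) := by
        have := refV_le_shift (N := N) (k-1)
          (g := fun v => g (Fin.cons (((k-1:ℕ)):ℝ) v))
          (g' := fun v => g' (Fin.cons (((k+2-1:ℕ)):ℝ) v))
          (by exact hle (k-1) (k+2-1) (by omega)) (hmono _)
        exact this
      have e1 : ((k+1) + 2 : ℕ) = ((k + 2 + 1 : ℕ)) := by omega
      have e2 : ((k-1) + 2 : ℕ) = ((k + 2 - 1 : ℕ)) := by omega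
      rw [e1] at key1
      rw [e2] at key2
      nlinarith


lemma mono_cons {N : ℕ} {g : (Fin (N+1) → ℝ) → ℝ} (hg : Monotone g) (c : ℝ) :
    Monotone (fun v => g (Fin.cons c v)) := fun v v' hv => hg (cons_le_cons le_rfl hv)

lemma le_cons {N : ℕ} {g : (Fin (N+1) → ℝ) → ℝ} (hg : Monotone g) {c c' : ℝ} (hc : c ≤ c') :
    ∀ v, g (Fin.cons c v) ≤ g (Fin.cons c' v) := fun v => hg (cons_le_cons hc le_rfl)

section Main

variable {p q : ℝ} (hq0 : 0 ≤ q) (hqp : q ≤ p) (hpq1 : p + q = 1)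

include hq0 hqp hpq1 in
/-- The key induction: the reflected symmetric walk from height `k` is stochastically
below any mixture of the `p`-walk at `+k`/`-k` whose weights `a`, `b` satisfy the
invariant `b * p^(k-1) ≤ a * q^(k-1)`. -/
lemma main_ineq : ∀ {N : ℕ} (k : ℕ) (g : (Fin N → ℝ) → ℝ), Monotone g →
    ∀ (a b : ℝ), 0 ≤ a → 0 ≤ b → (k = 0 ∨ b * p^(k-1) ≤ a * q^(k-1)) →
    (a + b) * refV N k g ≤ a * biasV p q N (k:ℤ) g + b * biasV p q N (-(k:ℤ)) g := by
  intro N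
  induction N with
  | zero =>
    intro k g hg a b ha hb hinv
    rw [refV_zero, biasV_zero, biasV_zero]
    exact le_of_eq (by ring)
  | succ N IH =>
    intro k g hg a b ha hb hinv
    have hp0 : 0 ≤ p := le_trans hq0 hqp
    by_cases hk : k = 0
    · subst hk
      rw [refV_succ_zero]
      have e0 : ((0:ℕ):ℤ) = 0 := rfl
      rw [e0, neg_zero, biasV_succ]
      have e1 : |(0:ℤ)+1| = ((1:ℕ):ℤ) := by norm_num
      have e2 : |(0:ℤ)-1| = ((1:ℕ):ℤ) := by norm_num
      have e3 : ((0:ℤ)+1) = ((1:ℕ):ℤ) := by norm_num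
      have e4 : ((0:ℤ)-1) = -((1:ℕ):ℤ) := by norm_num
      rw [e1, e2, e3, e4]
      set G : (Fin N → ℝ) → ℝ := fun v => g (Fin.cons (((1:ℕ):ℤ):ℝ) v) with hG
      have hGmono : Monotone G := mono_cons hg _
      have hGeq : refV N 1 (fun v => g (Fin.cons ((1:ℕ):ℝ) v)) = refV N 1 G := by
        norm_num [hG]
      rw [hGeq]
      have key := IH 1 G hGmono ((a+b)*p) ((a+b)*q)
        (by positivity) (by positivity)
        (Or.inr (by norm_num; nlinarith))
      have hsum : (a+b)*p + (a+b)*q = a + b := by nlinarith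
      rw [hsum] at key
      -- key : (a+b) * refV N 1 G ≤ (a+b)*p * biasV N 1 G + (a+b)*q * biasV N (-1) G
      -- goal : (a+b) * refV N 1 G ≤ a * (p * B1 + q * B2) + b * (p * B1 + q * B2)
      have e5 : ((1:ℕ):ℤ) = 1 := rfl
      rw [e5] at key ⊢
      nlinarith [key]
    · have hk1 : 1 ≤ k := Nat.one_le_iff_ne_zero.mpr hk
      have hinv' : b * p^(k-1) ≤ a * q^(k-1) := hinv.resolve_left hk
      -- b ≤ a
      have hab : b ≤ a := by
        rcases eq_or_lt_of_le hq0 with hq | hq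
        · -- q = 0, p = 1
          rcases Nat.eq_or_lt_of_le hk1 with hk2 | hk2
          · simpa [← hk2] using hinv'
          · have hkk : k - 1 ≠ 0 := by omega
            rw [← hq, zero_pow hkk] at hinv'
            have hp1 : p = 1 := by linarith
            rw [hp1, one_pow] at hinv'
            nlinarith
        · have h1 : b * q^(k-1) ≤ b * p^(k-1) :=
            mul_le_mul_of_nonneg_left (pow_le_pow_left₀ (le_of_lt hq) hqp _) hb
          have h2 : b * q^(k-1) ≤ a * q^(k-1) := le_trans h1 hinv'
          have h3 : 0 < q^(k-1) := pow_pos hq _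
          nlinarith
      rw [refV_succ k hk, biasV_succ, biasV_succ]
      -- normalize integer indices and cast values
      have ep1 : (k:ℤ)+1 = ((k+1:ℕ):ℤ) := by push_cast; ring
      have em1 : (k:ℤ)-1 = ((k-1:ℕ):ℤ) := by omega
      have enp1 : -(k:ℤ)+1 = -((k-1:ℕ):ℤ) := by omega
      have enm1 : -(k:ℤ)-1 = -((k+1:ℕ):ℤ) := by omega
      have ab1 : |(k:ℤ)+1| = ((k+1:ℕ):ℤ) := by rw [ep1]; exact abs_of_nonneg (by positivity)
      have ab2 : |(k:ℤ)-1| = ((k-1:ℕ):ℤ) := by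
        rw [em1]; exact abs_of_nonneg (by positivity)
      have ab3 : |-(k:ℤ)+1| = ((k-1:ℕ):ℤ) := by
        rw [enp1, abs_neg]; exact abs_of_nonneg (by positivity)
      have ab4 : |-(k:ℤ)-1| = ((k+1:ℕ):ℤ) := by
        rw [enm1, abs_neg]; exact abs_of_nonneg (by positivity)
      rw [ab1, ab2, ab3, ab4, ep1, em1, enp1, enm1]
      set Gp : (Fin N → ℝ) → ℝ := fun v => g (Fin.cons (((k+1:ℕ):ℤ):ℝ) v) with hGp
      set Gm : (Fin N → ℝ) → ℝ := fun v => g (Fin.cons (((k-1:ℕ):ℤ):ℝ) v) with hGm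
      have hGpm : Monotone Gp := mono_cons hg _
      have hGmm : Monotone Gm := mono_cons hg _
      have ecp : refV N (k+1) (fun v => g (Fin.cons ((k+1:ℕ):ℝ) v)) = refV N (k+1) Gp := by
        norm_num [hGp]
      have ecm : refV N (k-1) (fun v => g (Fin.cons ((k-1:ℕ):ℝ) v)) = refV N (k-1) Gm := by
        norm_num [hGm]
      rw [ecp, ecm]
      -- IH at k+1 with weights (a*p, b*q)
      have inv1 : (b*q) * p^((k+1)-1) ≤ (a*p) * q^((k+1)-1) := by
        have e : (k+1)-1 = (k-1)+1 := by omega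
        rw [e, pow_succ, pow_succ]
        nlinarith [mul_le_mul_of_nonneg_right hinv' (mul_nonneg hp0 hq0)]
      have IH1 := IH (k+1) Gp hGpm (a*p) (b*q) (mul_nonneg ha hp0) (mul_nonneg hb hq0)
        (Or.inr inv1)
      -- IH at k-1 with weights (a*q, b*p)
      have inv2 : (k-1) = 0 ∨ (b*p) * p^((k-1)-1) ≤ (a*q) * q^((k-1)-1) := by
        rcases Nat.eq_or_lt_of_le hk1 with hk2 | hk2
        · exact Or.inl (by omega)
        · refine Or.inr ?_
          have e : k - 1 = ((k-1)-1)+1 := by omega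
          rw [e, pow_succ, pow_succ] at hinv'
          nlinarith
      have IH2 := IH (k-1) Gm hGmm (a*q) (b*p) (mul_nonneg ha hq0) (mul_nonneg hb hp0) inv2
      -- monotone shift
      have hshift : refV N (k-1) Gm ≤ refV N (k+1) Gp := by
        have e : (k-1)+2 = k+1 := by omega
        rw [← e]
        refine refV_le_shift (k-1) ?_ hGpm
        intro v
        exact le_cons hg (by exact_mod_cast (by omega : ((k-1:ℕ):ℤ) ≤ ((k+1:ℕ):ℤ))) v
      set Rp := refV N (k+1) Gp with hRp
      set Rm := refV N (k-1) Gm with hRm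
      set B1 := biasV p q N ((k+1:ℕ):ℤ) Gp with hB1
      set B2 := biasV p q N (-((k+1:ℕ):ℤ)) Gp with hB2
      set B3 := biasV p q N ((k-1:ℕ):ℤ) Gm with hB3
      set B4 := biasV p q N (-((k-1:ℕ):ℤ)) Gm with hB4
      have hint : 0 ≤ (a-b)*(p-q)*(Rp-Rm) :=
        mul_nonneg (mul_nonneg (sub_nonneg.mpr hab) (sub_nonneg.mpr hqp)) (sub_nonneg.mpr hshift)
      have hLHS : (a+b) * (1/2 * Rp + 1/2 * Rm)
          = (a*p+b*q)*Rp + (a*q+b*p)*Rm - (1/2)*((a-b)*(p-q)*(Rp-Rm)) := by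
        have hq' : q = 1 - p := by linarith
        rw [hq']; ring
      have hRHS : a * (p * B1 + q * B3) + b * (p * B4 + q * B2)
          = ((a*p)*B1 + (b*q)*B2) + ((a*q)*B3 + (b*p)*B4) := by ring
      rw [hLHS, hRHS]
      nlinarith [IH1, IH2, hint]

end Main


lemma biasV_half : ∀ (N : ℕ) (z : ℤ) (g : (Fin N → ℝ) → ℝ),
    biasV (1/2) (1/2) N z g = refV N z.natAbs g
  | 0, z, g => by rw [biasV_zero, refV_zero]
  | (N+1), z, g => by
    rcases lt_trichotomy z 0 with hz | hz | hz
    · -- z < 0, k = natAbs z ≥ 1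
      set k := z.natAbs with hk
      have hk1 : 1 ≤ k := by omega
      have e1 : z + 1 = -((k-1:ℕ):ℤ) := by omega
      have e2 : z - 1 = -((k+1:ℕ):ℤ) := by omega
      have a1 : |z+1| = ((k-1:ℕ):ℤ) := by rw [e1, abs_neg]; exact abs_of_nonneg (by positivity)
      have a2 : |z-1| = ((k+1:ℕ):ℤ) := by rw [e2, abs_neg]; exact abs_of_nonneg (by positivity)
      rw [biasV_succ, a1, a2, e1, e2, biasV_half, biasV_half, refV_succ k (by omega)]
      have n1 : (-((k-1:ℕ):ℤ)).natAbs = k - 1 := by omega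
      have n2 : (-((k+1:ℕ):ℤ)).natAbs = k + 1 := by omega
      rw [n1, n2]
      have c1 : (((k-1:ℕ):ℤ):ℝ) = ((k-1:ℕ):ℝ) := by push_cast; ring
      have c2 : (((k+1:ℕ):ℤ):ℝ) = ((k+1:ℕ):ℝ) := by push_cast; ring
      rw [c1, c2]
      ring
    · subst hz
      rw [biasV_succ, Int.natAbs_zero, refV_succ_zero]
      have a1 : |(0:ℤ)+1| = ((1:ℕ):ℤ) := by norm_num
      have a2 : |(0:ℤ)-1| = ((1:ℕ):ℤ) := by norm_num
      have e1 : (0:ℤ)+1 = ((1:ℕ):ℤ) := by norm_num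
      have e2 : (0:ℤ)-1 = -((1:ℕ):ℤ) := by norm_num
      rw [a1, a2, e1, e2, biasV_half, biasV_half]
      have n1 : (((1:ℕ)):ℤ).natAbs = 1 := rfl
      have n2 : (-((1:ℕ):ℤ)).natAbs = 1 := rfl
      rw [n1, n2]
      have c1 : (((1:ℕ):ℤ):ℝ) = ((1:ℕ):ℝ) := by push_cast; ring
      rw [c1]
      ring
    · set k := z.natAbs with hk
      have hk1 : 1 ≤ k := by omega
      have e1 : z + 1 = ((k+1:ℕ):ℤ) := by omega
      have e2 : z - 1 = ((k-1:ℕ):ℤ) := by omega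
      have a1 : |z+1| = ((k+1:ℕ):ℤ) := by rw [e1]; exact abs_of_nonneg (by positivity)
      have a2 : |z-1| = ((k-1:ℕ):ℤ) := by rw [e2]; exact abs_of_nonneg (by positivity)
      rw [biasV_succ, a1, a2, e1, e2, biasV_half, biasV_half, refV_succ k (by omega)]
      have n1 : (((k+1:ℕ)):ℤ).natAbs = k + 1 := by omega
      have n2 : (((k-1:ℕ)):ℤ).natAbs = k - 1 := by omega
      rw [n1, n2]
      have c1 : (((k-1:ℕ):ℤ):ℝ) = ((k-1:ℕ):ℝ) := by push_cast; ring
      have c2 : (((k+1:ℕ):ℤ):ℝ) = ((k+1:ℕ):ℝ) := by push_cast; ring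
      rw [c1, c2]
      try ring

/-- `±1` step encoded by a Boolean. -/
def sg (b : Bool) : ℝ := if b then 1 else -1

/-- `±1` step as an integer. -/
def dz (b : Bool) : ℤ := if b then 1 else -1

lemma sg_eq_cast_dz (b : Bool) : sg b = ((dz b : ℤ) : ℝ) := by cases b <;> simp [sg, dz]

noncomputable def wSum (N : ℕ) (W : Fin N → Bool → ℝ) (z : ℤ) (g : (Fin N → ℝ) → ℝ) : ℝ :=
  ∑ ε : Fin N → Bool, (∏ i, W i (ε i)) *
    g (fun n => |(z:ℝ) + ∑ i, if i ≤ n then sg (ε i) else 0|)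

lemma wSum_zero (W : Fin 0 → Bool → ℝ) (z : ℤ) (g : (Fin 0 → ℝ) → ℝ) :
    wSum 0 W z g = g (fun i => i.elim0) := by
  rw [wSum]
  have : ∀ ε : Fin 0 → Bool, (∏ i, W i (ε i)) *
      g (fun n => |(z:ℝ) + ∑ i, if i ≤ n then sg (ε i) else 0|) = g (fun i => i.elim0) := by
    intro ε
    rw [Finset.prod_of_isEmpty]
    rw [one_mul]
    congr 1
    funext n
    exact n.elim0
  rw [Fintype.sum_congr _ _ this, Finset.sum_const, Finset.card_univ, Fintype.card_unique,
    one_smul]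

lemma path_cons {N : ℕ} (z : ℤ) (b : Bool) (ε' : Fin N → Bool) :
    (fun n : Fin (N+1) => |(z:ℝ) + ∑ i, if i ≤ n then sg ((Fin.cons b ε' : Fin (N+1) → Bool) i) else 0|)
      = Fin.cons ((|z + dz b| : ℤ) : ℝ)
          (fun m : Fin N => |((z + dz b : ℤ):ℝ) + ∑ i, if i ≤ m then sg (ε' i) else 0|) := by
  funext n
  refine Fin.cases ?_ ?_ n
  · have hsum : (∑ i : Fin (N+1), if i ≤ (0 : Fin (N+1)) then sg ((Fin.cons b ε' : Fin (N+1) → Bool) i) else 0)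
        = sg b := by
      rw [Fin.sum_univ_succ]
      simp only [Fin.cons_zero, Fin.cons_succ, le_refl, if_true]
      have : ∀ i : Fin N, (if i.succ ≤ (0:Fin (N+1)) then sg (ε' i) else 0) = 0 := by
        intro i
        rw [if_neg (not_le.mpr (Fin.succ_pos i))]
      rw [Finset.sum_congr rfl (fun i _ => this i), Finset.sum_const, smul_zero, add_zero]
    rw [hsum, Fin.cons_zero, sg_eq_cast_dz]
    push_cast
    ring_nf
  · intro m
    have hsum : (∑ i : Fin (N+1), if i ≤ m.succ then sg ((Fin.cons b ε' : Fin (N+1) → Bool) i) else 0)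
        = sg b + ∑ i : Fin N, if i ≤ m then sg (ε' i) else 0 := by
      rw [Fin.sum_univ_succ]
      simp only [Fin.cons_zero, Fin.cons_succ, Fin.zero_le, if_true]
      congr 1
      refine Finset.sum_congr rfl (fun i _ => ?_)
      simp only [Fin.succ_le_succ_iff]
    rw [hsum, Fin.cons_succ, sg_eq_cast_dz]
    push_cast
    ring_nf

lemma wSum_succ {N : ℕ} (W : Fin (N+1) → Bool → ℝ) (z : ℤ) (g : (Fin (N+1) → ℝ) → ℝ) :
    wSum (N+1) W z g
      = W 0 true * wSum N (fun i => W i.succ) (z+1)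
          (fun v => g (Fin.cons ((|z+1| : ℤ) : ℝ) v))
      + W 0 false * wSum N (fun i => W i.succ) (z-1)
          (fun v => g (Fin.cons ((|z-1| : ℤ) : ℝ) v)) := by
  rw [wSum]
  rw [← Equiv.sum_comp (Fin.consEquiv (fun _ => Bool))]
  rw [Fintype.sum_prod_type]
  rw [Fintype.sum_bool]
  congr 1
  · rw [wSum, Finset.mul_sum]
    refine Finset.sum_congr rfl (fun ε' _ => ?_)
    have hcons : (Fin.consEquiv (fun _ => Bool)) (true, ε') = Fin.cons true ε' := rfl
    rw [hcons]
    rw [Fin.prod_univ_succ]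
    simp only [Fin.cons_zero, Fin.cons_succ]
    rw [path_cons]
    have : dz true = 1 := rfl
    rw [this]
    ring
  · rw [wSum, Finset.mul_sum]
    refine Finset.sum_congr rfl (fun ε' _ => ?_)
    have hcons : (Fin.consEquiv (fun _ => Bool)) (false, ε') = Fin.cons false ε' := rfl
    rw [hcons]
    rw [Fin.prod_univ_succ]
    simp only [Fin.cons_zero, Fin.cons_succ]
    rw [path_cons]
    have : dz false = -1 := rfl
    rw [this]
    have : z + -1 = z - 1 := by ring
    rw [this]
    ring


lemma wSum_const_eq_biasV (p q : ℝ) : ∀ (N : ℕ) (z : ℤ) (g : (Fin N → ℝ) → ℝ),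
    wSum N (fun _ b => if b then p else q) z g = biasV p q N z g
  | 0, z, g => by rw [wSum_zero, biasV_zero]
  | (N+1), z, g => by
    rw [wSum_succ, biasV_succ]
    rw [wSum_const_eq_biasV, wSum_const_eq_biasV]
    norm_num

/-- Weight family for the `p`-walk: the initial step is symmetric, later steps biased. -/
noncomputable def Wp (p q : ℝ) {N : ℕ} : Fin (N+1) → Bool → ℝ :=
  fun i b => if i = 0 then 1/2 else (if b then p else q)

/-- Finite-dimensional stochastic dominance, in explicit-sum form. -/
lemma sum_FD {p q : ℝ} (hq0 : 0 ≤ q) (hqp : q ≤ p) (hpq1 : p + q = 1)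
    (N : ℕ) (g : (Fin (N+1) → ℝ) → ℝ) (hg : Monotone g) :
    wSum (N+1) (fun _ _ => (1/2:ℝ)) 0 g ≤ wSum (N+1) (Wp p q) 0 g := by
  have hhalf : (fun (_ : Fin (N+1)) (b : Bool) => (1/2:ℝ)) =
      (fun _ b => if b then (1/2:ℝ) else (1/2:ℝ)) := by
    funext i b; cases b <;> simp
  have hL : wSum (N+1) (fun _ _ => (1/2:ℝ)) 0 g = refV (N+1) 0 g := by
    rw [hhalf, wSum_const_eq_biasV, biasV_half, Int.natAbs_zero]
  have hsucc : (fun (i : Fin N) => (Wp p q (N := N)) i.succ) =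
      (fun _ b => if b then p else q) := by
    funext i b
    simp [Wp, Fin.succ_ne_zero]
  have hR : wSum (N+1) (Wp p q) 0 g
      = 1/2 * biasV p q N 1 (fun v => g (Fin.cons ((|(0:ℤ)+1| : ℤ) : ℝ) v))
      + 1/2 * biasV p q N (-1) (fun v => g (Fin.cons ((|(0:ℤ)-1| : ℤ) : ℝ) v)) := by
    rw [wSum_succ, hsucc, wSum_const_eq_biasV, wSum_const_eq_biasV]
    norm_num [Wp]
  rw [hL, hR, refV_succ_zero]
  have c1 : ((|(0:ℤ)+1| : ℤ) : ℝ) = ((1:ℕ):ℝ) := by norm_num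
  have c2 : ((|(0:ℤ)-1| : ℤ) : ℝ) = ((1:ℕ):ℝ) := by norm_num
  rw [c1, c2]
  set G : (Fin N → ℝ) → ℝ := fun v => g (Fin.cons ((1:ℕ):ℝ) v) with hG
  have hGmono : Monotone G := mono_cons hg _
  have key := main_ineq hq0 hqp hpq1 1 G hGmono (1/2) (1/2) (by norm_num) (by norm_num)
    (Or.inr (by norm_num))
  have e1 : ((1:ℕ):ℤ) = 1 := rfl
  rw [e1] at key
  linarith [key]


/-- weight of a boolean step under success probability `r` -/
noncomputable def stepW (r : ℝ) (b : Bool) : ℝ := if b then r else 1 - r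

lemma stepDist_apply {r : ℝ} {s : Set ℝ} (hs : MeasurableSet s) :
    stepDist r s = ENNReal.ofReal (stepW r true) * (if sg true ∈ s then 1 else 0)
      + ENNReal.ofReal (stepW r false) * (if sg false ∈ s then 1 else 0) := by
  rw [stepDist, Measure.add_apply, Measure.smul_apply, Measure.smul_apply,
    Measure.dirac_apply' _ hs, Measure.dirac_apply' _ hs]
  simp [stepW, sg, Set.indicator_apply, mul_comm]

lemma isProbabilityMeasure_stepDist {r : ℝ} (h0 : 0 ≤ r) (h1 : r ≤ 1) :
    IsProbabilityMeasure (stepDist r) := by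
  constructor
  rw [stepDist_apply MeasurableSet.univ]
  simp only [Set.mem_univ, if_true, mul_one]
  rw [← ENNReal.ofReal_add (by simpa [stepW] using h0) (by simp [stepW]; linarith)]
  simp [stepW]

lemma sum_prod_bool {M : ℕ} (F : Fin M → Bool → ℝ≥0∞) :
    ∑ ε : Fin M → Bool, ∏ i, F i (ε i) = ∏ i, (F i true + F i false) := by
  rw [← Fintype.piFinset_univ, Finset.sum_prod_piFinset]
  refine Finset.prod_congr rfl (fun i _ => ?_)
  rw [Fintype.sum_bool]

/-- The explicit representation of the product of step distributions as a finite
combination of Dirac measures. -/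
noncomputable def diracSum (M : ℕ) (r : Fin M → ℝ) : Measure (Fin M → ℝ) :=
  ∑ ε : Fin M → Bool, (∏ i, ENNReal.ofReal (stepW (r i) (ε i))) • Measure.dirac (fun i => sg (ε i))

lemma diracSum_apply {M : ℕ} (r : Fin M → ℝ) {E : Set (Fin M → ℝ)} (hE : MeasurableSet E) :
    diracSum M r E = ∑ ε : Fin M → Bool,
      (∏ i, ENNReal.ofReal (stepW (r i) (ε i))) * (if (fun i => sg (ε i)) ∈ E then 1 else 0) := by
  rw [diracSum, Measure.finset_sum_apply]
  refine Finset.sum_congr rfl (fun ε _ => ?_)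
  rw [Measure.smul_apply, Measure.dirac_apply' _ hE]
  simp [Set.indicator_apply]

lemma pi_stepDist_eq (M : ℕ) (r : Fin M → ℝ) (hr : ∀ i, 0 ≤ r i ∧ r i ≤ 1) :
    haveI : ∀ i, IsProbabilityMeasure (stepDist (r i)) :=
      fun i => isProbabilityMeasure_stepDist (hr i).1 (hr i).2
    Measure.pi (fun i => stepDist (r i)) = diracSum M r := by
  haveI : ∀ i, IsProbabilityMeasure (stepDist (r i)) :=
    fun i => isProbabilityMeasure_stepDist (hr i).1 (hr i).2
  refine Measure.pi_eq (fun s hs => ?_)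
  rw [diracSum_apply r (MeasurableSet.univ_pi hs)]
  have key : ∀ ε : Fin M → Bool,
      (∏ i, ENNReal.ofReal (stepW (r i) (ε i))) * (if (fun i => sg (ε i)) ∈ Set.pi Set.univ s then 1 else 0)
      = ∏ i, (ENNReal.ofReal (stepW (r i) (ε i)) * (if sg (ε i) ∈ s i then 1 else 0)) := by
    intro ε
    rw [Finset.prod_mul_distrib]
    congr 1
    rw [Set.mem_univ_pi]
    by_cases h : ∀ i, sg (ε i) ∈ s i
    · rw [if_pos h]
      rw [Finset.prod_congr rfl (fun i _ => if_pos (h i))]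
      simp
    · rw [if_neg h]
      push_neg at h
      obtain ⟨i, hi⟩ := h
      refine (Finset.prod_eq_zero (Finset.mem_univ i) ?_).symm
      exact if_neg hi
  rw [Finset.sum_congr rfl (fun ε _ => key ε)]
  rw [sum_prod_bool (fun i b => ENNReal.ofReal (stepW (r i) b) * (if sg b ∈ s i then 1 else 0))]
  exact Finset.prod_congr rfl (fun i _ => (stepDist_apply (hs i)).symm)


/-- reflected partial-sum path of a finite vector -/
noncomputable def pabs (M : ℕ) : (Fin M → ℝ) → (Fin M → ℝ) :=
  fun x n => |∑ i, if i ≤ n then x i else 0|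

lemma measurable_pabs (M : ℕ) : Measurable (pabs M) := by
  refine measurable_pi_lambda _ (fun n => ?_)
  refine Measurable.abs ?_
  refine Finset.measurable_sum _ (fun i _ => ?_)
  by_cases h : i ≤ n
  · simpa [h] using measurable_pi_apply i
  · simp [h]

lemma map_pvec_eq {Ω : Type*} [MeasurableSpace Ω] (μ : Measure Ω) [IsProbabilityMeasure μ]
    (Y : ℕ → Ω → ℝ) (hYm : ∀ i, Measurable (Y i))
    (hind : iIndepFun Y μ)
    (M : ℕ) (r : Fin M → ℝ) (hr : ∀ i, 0 ≤ r i ∧ r i ≤ 1)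
    (hmarg : ∀ i : Fin M, μ.map (Y (i:ℕ)) = stepDist (r i)) :
    μ.map (fun ω (i : Fin M) => Y (i:ℕ) ω) = diracSum M r := by
  haveI : ∀ i, IsProbabilityMeasure (stepDist (r i)) :=
    fun i => isProbabilityMeasure_stepDist (hr i).1 (hr i).2
  rw [← pi_stepDist_eq M r hr]
  refine Eq.symm (Measure.pi_eq (fun s hs => ?_))
  rw [Measure.map_apply (measurable_pi_lambda (fun ω (i : Fin M) => Y (i:ℕ) ω)
    (fun i => hYm (i:ℕ))) (MeasurableSet.univ_pi hs)]
  have hpre : (fun ω (i : Fin M) => Y (i:ℕ) ω) ⁻¹' (Set.pi Set.univ s)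
      = ⋂ n ∈ Finset.range M, (if h : n < M then Y n ⁻¹' (s ⟨n, h⟩) else Set.univ) := by
    ext ω
    simp only [Set.mem_preimage, Set.mem_univ_pi, Set.mem_iInter, Finset.mem_range]
    constructor
    · intro h n hn
      rw [dif_pos hn]
      exact h ⟨n, hn⟩
    · intro h i
      have h2 := h (i:ℕ) i.isLt
      rw [dif_pos i.isLt] at h2
      simpa using h2
  rw [hpre]
  rw [hind.meas_biInter (fun n hn => ?_)]
  swap
  · rcases Nat.lt_or_ge n M with h | h
    · rw [dif_pos h]
      exact ⟨s ⟨n, h⟩, hs _, rfl⟩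
    · rw [dif_neg (by omega)]
      exact ⟨Set.univ, MeasurableSet.univ, by simp⟩
  rw [← Fin.prod_univ_eq_prod_range
    (fun n => μ (if h : n < M then Y n ⁻¹' (s ⟨n, h⟩) else Set.univ)) M]
  refine Finset.prod_congr rfl (fun i _ => ?_)
  rw [dif_pos i.isLt]
  have : (⟨(i:ℕ), i.isLt⟩ : Fin M) = i := by simp
  rw [this, ← Measure.map_apply (hYm _) (hs i), hmarg i]

/-- the full reflected path of the walk, as a map to sequence space -/
noncomputable def pathMap {Ω : Type*} (Y : ℕ → Ω → ℝ) : Ω → (ℕ → ℝ) :=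
  fun ω n => |∑ i ∈ Finset.range (n+1), Y i ω|

lemma measurable_pathMap {Ω : Type*} [MeasurableSpace Ω] {Y : ℕ → Ω → ℝ}
    (hYm : ∀ i, Measurable (Y i)) : Measurable (pathMap Y) := by
  refine measurable_pi_lambda _ (fun n => ?_)
  exact (Finset.measurable_sum _ (fun i _ => hYm i)).abs

/-- projection to the first `M` coordinates -/
def proj (M : ℕ) : (ℕ → ℝ) → (Fin M → ℝ) := fun x i => x i

lemma measurable_proj (M : ℕ) : Measurable (proj M) :=
  measurable_pi_lambda _ (fun i => measurable_pi_apply _)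

lemma proj_pathMap {Ω : Type*} (Y : ℕ → Ω → ℝ) (M : ℕ) (ω : Ω) :
    proj M (pathMap Y ω) = pabs M (fun i => Y (i:ℕ) ω) := by
  funext n
  show |∑ i ∈ Finset.range ((n:ℕ)+1), Y i ω| = |∑ i : Fin M, if i ≤ n then Y (i:ℕ) ω else 0|
  congr 1
  have h1 : ∑ i : Fin M, (if i ≤ n then Y (i:ℕ) ω else 0)
      = ∑ i ∈ Finset.range M, (if i ≤ (n:ℕ) then Y i ω else 0) := by
    rw [← Fin.sum_univ_eq_sum_range (fun i => if i ≤ (n:ℕ) then Y i ω else 0) M]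
    refine Finset.sum_congr rfl (fun i _ => ?_)
    exact if_congr Fin.le_def rfl rfl
  rw [h1]
  rw [← Finset.sum_subset (Finset.range_subset_range.mpr (by omega : (n:ℕ)+1 ≤ M))
    (fun x hx hnx => ?_)]
  · refine Finset.sum_congr rfl (fun i hi => ?_)
    rw [if_pos (by simp at hi; omega)]
  · rw [if_neg (by simp at hx hnx; omega)]

lemma map_cylinder_eq {Ω : Type*} [MeasurableSpace Ω] (μ : Measure Ω) [IsProbabilityMeasure μ]
    (Y : ℕ → Ω → ℝ) (hYm : ∀ i, Measurable (Y i))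
    (hind : iIndepFun Y μ)
    (M : ℕ) (r : Fin M → ℝ) (hr : ∀ i, 0 ≤ r i ∧ r i ≤ 1)
    (hmarg : ∀ i : Fin M, μ.map (Y (i:ℕ)) = stepDist (r i))
    (S : Set (Fin M → ℝ)) (hS : MeasurableSet S) :
    μ.map (pathMap Y) ((proj M) ⁻¹' S)
      = ENNReal.ofReal (wSum M (fun i b => stepW (r i) b) 0
          (fun v => if v ∈ S then (1:ℝ) else 0)) := by
  rw [Measure.map_apply (measurable_pathMap hYm) ((measurable_proj M) hS)]
  have hset : pathMap Y ⁻¹' (proj M ⁻¹' S)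
      = (fun ω (i : Fin M) => Y (i:ℕ) ω) ⁻¹' (pabs M ⁻¹' S) := by
    ext ω
    simp only [Set.mem_preimage]
    rw [proj_pathMap]
  rw [hset, ← Measure.map_apply (measurable_pi_lambda (fun ω (i : Fin M) => Y (i:ℕ) ω)
    (fun i => hYm (i:ℕ))) ((measurable_pabs M) hS)]
  rw [map_pvec_eq μ Y hYm hind M r hr hmarg]
  rw [diracSum_apply r ((measurable_pabs M) hS)]
  rw [wSum]
  rw [ENNReal.ofReal_sum_of_nonneg (fun ε _ => ?_)]
  swap
  · refine mul_nonneg (Finset.prod_nonneg (fun i _ => ?_)) ?_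
    · simp only [stepW]
      rcases (hr i) with ⟨h0, h1⟩
      cases (ε : Fin M → Bool) i <;> simp <;> linarith
    · split <;> norm_num
  refine Finset.sum_congr rfl (fun ε _ => ?_)
  have hprod0 : ∀ i ∈ Finset.univ, 0 ≤ stepW (r i) (ε i) := by
    intro i _
    rcases (hr i) with ⟨h0, h1⟩
    cases (ε i) <;> simp [stepW] <;> linarith
  rw [ENNReal.ofReal_mul (Finset.prod_nonneg hprod0)]
  rw [ENNReal.ofReal_prod_of_nonneg hprod0]
  congr 1
  have harg : (fun n => |(((0:ℤ)):ℝ) + ∑ i, if i ≤ n then sg (ε i) else 0|)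
      = pabs M (fun i => sg (ε i)) := by
    funext n
    simp [pabs]
  rw [harg]
  by_cases h : pabs M (fun i => sg (ε i)) ∈ S <;> simp [h]


section Topology

lemma isClosed_upClosure {ι : Type*} [Countable ι] {K : Set (ι → ℝ)} (hK : IsCompact K) :
    IsClosed {x : ι → ℝ | ∃ v ∈ K, v ≤ x} := by
  refine IsSeqClosed.isClosed ?_
  intro x a hx hxa
  choose v hvK hvle using hx
  obtain ⟨w, hwK, φ, hφ, hconv⟩ := hK.tendsto_subseq hvK
  refine ⟨w, hwK, ?_⟩
  intro i
  have h1 : Filter.Tendsto (fun n => v (φ n) i) Filter.atTop (nhds (w i)) :=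
    (tendsto_pi_nhds.mp hconv) i
  have h2 : Filter.Tendsto (fun n => x (φ n) i) Filter.atTop (nhds (a i)) :=
    (tendsto_pi_nhds.mp (hxa.comp hφ.tendsto_atTop)) i
  exact le_of_tendsto_of_tendsto' h1 h2 (fun n => hvle (φ n) i)

/-- The compact "box" carrying the reflected-walk paths. -/
def KK : Set (ℕ → ℝ) := Set.pi Set.univ (fun n => Set.Icc (0:ℝ) (n+1))

lemma isCompact_KK : IsCompact KK := isCompact_univ_pi (fun n => isCompact_Icc)

lemma measurableSet_KK : MeasurableSet KK :=
  isCompact_KK.isClosed.measurableSet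

/-- Infinite-dimensional extension: cylinder dominance on upper sets extends to all
measurable upper sets, for probability measures carried by the compact box. -/
lemma upper_dominance (ν' ν : Measure (ℕ → ℝ)) [IsProbabilityMeasure ν']
    [IsProbabilityMeasure ν]
    (hcyl : ∀ (N : ℕ) (S : Set (Fin (N+1) → ℝ)), MeasurableSet S → IsUpperSet S →
      ν' ((proj (N+1)) ⁻¹' S) ≤ ν ((proj (N+1)) ⁻¹' S))
    (hK' : ν' KKᶜ = 0) (hK : ν KKᶜ = 0)
    (A : Set (ℕ → ℝ)) (hA : MeasurableSet A) (hAu : IsUpperSet A) :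
    ν' A ≤ ν A := by
  refine ENNReal.le_of_forall_pos_le_add (fun ε hε hlt => ?_)
  have hAK : MeasurableSet (A ∩ KK) := hA.inter measurableSet_KK
  -- inner approximation by a closed (hence compact) subset
  obtain ⟨F, hFsub, hFclosed, hFmeas⟩ :=
    hAK.exists_isClosed_lt_add (μ := ν') (measure_ne_top ν' _)
      (by exact_mod_cast (ne_of_gt (by exact_mod_cast hε)) : (ε : ℝ≥0∞) ≠ 0)
  have hFK : F ⊆ KK := hFsub.trans Set.inter_subset_right
  have hFcomp : IsCompact F := IsCompact.of_isClosed_subset isCompact_KK hFclosed hFK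
  -- the compact upper "hull" of F inside KK
  set C : Set (ℕ → ℝ) := KK ∩ {x | ∃ v ∈ F, v ≤ x} with hC
  have hCcomp : IsCompact C := isCompact_KK.inter_right (isClosed_upClosure hFcomp)
  have hCA : C ⊆ A := by
    rintro x ⟨-, v, hvF, hvx⟩
    exact hAu hvx (hFsub hvF).1
  have hFC : F ⊆ C := fun x hx => ⟨hFK hx, x, hx, le_rfl⟩
  -- cylinder approximations of C
  set U : (N : ℕ) → Set (Fin (N+1) → ℝ) :=
    fun N => {y | ∃ v ∈ C, proj (N+1) v ≤ y} with hU
  have hUupper : ∀ N, IsUpperSet (U N) := by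
    intro N y y' hyy' ⟨v, hvC, hvy⟩
    exact ⟨v, hvC, le_trans hvy hyy'⟩
  have hUclosed : ∀ N, IsClosed (U N) := by
    intro N
    have himg : IsCompact (proj (N+1) '' C) :=
      hCcomp.image (continuous_pi (fun i => continuous_apply _))
    have : U N = {y | ∃ w ∈ proj (N+1) '' C, w ≤ y} := by
      ext y
      constructor
      · rintro ⟨v, hvC, hv⟩; exact ⟨proj (N+1) v, Set.mem_image_of_mem _ hvC, hv⟩
      · rintro ⟨w, ⟨v, hvC, rfl⟩, hw⟩; exact ⟨v, hvC, hw⟩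
    rw [this]
    exact isClosed_upClosure himg
  set D : ℕ → Set (ℕ → ℝ) := fun N => (proj (N+1)) ⁻¹' (U N) with hD
  have hDmeas : ∀ N, MeasurableSet (D N) :=
    fun N => (measurable_proj (N+1)) ((hUclosed N).measurableSet)
  have hCD : ∀ N, C ⊆ D N := fun N x hx => ⟨x, hx, le_rfl⟩
  have hDanti : Antitone D := by
    refine antitone_nat_of_succ_le (fun N x hx => ?_)
    obtain ⟨v, hvC, hv⟩ := hx
    refine ⟨v, hvC, fun i => ?_⟩
    have := hv ⟨(i:ℕ), by omega⟩
    simpa [proj] using this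
  have hiInterC : (⋂ N, D N) ∩ KK ⊆ C := by
    rintro x ⟨hxD, hxK⟩
    simp only [Set.mem_iInter] at hxD
    have hchoice : ∀ N : ℕ, ∃ v ∈ C, proj (N+1) v ≤ proj (N+1) x := fun N => hxD N
    choose v hvC hvle using hchoice
    obtain ⟨w, hwC, φ, hφ, hconv⟩ := hCcomp.tendsto_subseq hvC
    have hwx : w ≤ x := by
      intro i
      have h1 : Filter.Tendsto (fun n => v (φ n) i) Filter.atTop (nhds (w i)) :=
        (tendsto_pi_nhds.mp hconv) i
      refine le_of_tendsto h1 (Filter.eventually_atTop.mpr ⟨(i:ℕ), fun n hn => ?_⟩)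
      have hlt : (i : ℕ) < φ n + 1 := by
        have : n ≤ φ n := hφ.le_apply
        omega
      have := hvle (φ n) ⟨(i:ℕ), hlt⟩
      simpa [proj] using this
    obtain ⟨hwK, u, huF, huw⟩ := hwC
    exact ⟨hxK, u, huF, le_trans huw hwx⟩
  -- assemble
  have hstep : ∀ N, ν' A ≤ ν (D N) + ε := by
    intro N
    have h1 : ν' A ≤ ν' (A ∩ KK) := by
      have := measure_inter_add_diff (μ := ν') A measurableSet_KK
      have h2 : ν' (A \ KK) ≤ ν' KKᶜ := measure_mono (fun x hx => hx.2)
      rw [hK'] at h2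
      have h2' : ν' (A \ KK) = 0 := le_antisymm h2 (zero_le)
      calc ν' A = ν' (A ∩ KK) + ν' (A \ KK) := this.symm
        _ = ν' (A ∩ KK) := by rw [h2', add_zero]
        _ ≤ ν' (A ∩ KK) := le_rfl
    calc ν' A ≤ ν' (A ∩ KK) := h1
      _ ≤ ν' F + ε := le_of_lt hFmeas
      _ ≤ ν' C + ε := add_le_add_left (measure_mono hFC) ε
      _ ≤ ν' (D N) + ε := add_le_add_left (measure_mono (hCD N)) ε
      _ ≤ ν (D N) + ε := add_le_add_left (hcyl N (U N) ((hUclosed N).measurableSet) (hUupper N)) ε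
  have hinf : ν (⋂ N, D N) = ⨅ N, ν (D N) := by
    refine Directed.measure_iInter (fun N => (hDmeas N).nullMeasurableSet)
      (directed_of_isDirected_le ?_) ⟨0, measure_ne_top _ _⟩
    intro a b hab
    exact hDanti hab
  have hlim : ν' A ≤ ν (⋂ N, D N) + ε := by
    rw [hinf]
    have : ν' A ≤ ⨅ N, (ν (D N) + ε) := le_iInf (fun N => hstep N)
    refine le_trans this ?_
    rw [ENNReal.iInf_add]
  have hfinal : ν (⋂ N, D N) ≤ ν A := by
    have hsplit := measure_inter_add_diff (μ := ν) (⋂ N, D N) measurableSet_KK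
    have hdiff : ν ((⋂ N, D N) \ KK) ≤ ν KKᶜ := measure_mono (fun x hx => hx.2)
    rw [hK] at hdiff
    have hdiff' : ν ((⋂ N, D N) \ KK) = 0 := le_antisymm hdiff (zero_le)
    calc ν (⋂ N, D N) = ν ((⋂ N, D N) ∩ KK) + ν ((⋂ N, D N) \ KK) := hsplit.symm
      _ = ν ((⋂ N, D N) ∩ KK) := by rw [hdiff', add_zero]
      _ ≤ ν C := measure_mono hiInterC
      _ ≤ ν A := measure_mono hCA
  exact le_trans hlim (add_le_add_left hfinal ε)

end Topology


lemma measurableSet_absgt : MeasurableSet {x : ℝ | 1 < |x|} :=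
  (isOpen_lt continuous_const continuous_abs).measurableSet

lemma pathMap_mem_KK {Ω : Type*} [MeasurableSpace Ω] (μ : Measure Ω) [IsProbabilityMeasure μ]
    (Y : ℕ → Ω → ℝ) (hYm : ∀ i, Measurable (Y i)) (r : ℕ → ℝ)
    (hmarg : ∀ i, μ.map (Y i) = stepDist (r i)) :
    μ.map (pathMap Y) KKᶜ = 0 := by
  rw [Measure.map_apply (measurable_pathMap hYm) measurableSet_KK.compl]
  have hsub : pathMap Y ⁻¹' KKᶜ ⊆ ⋃ i, {ω | 1 < |Y i ω|} := by
    intro ω hω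
    by_contra hcon
    simp only [Set.mem_iUnion, not_exists, Set.mem_setOf_eq, not_lt] at hcon
    apply hω
    intro n _
    refine ⟨abs_nonneg _, ?_⟩
    calc |∑ i ∈ Finset.range (n+1), Y i ω| ≤ ∑ i ∈ Finset.range (n+1), |Y i ω| :=
          Finset.abs_sum_le_sum_abs _ _
      _ ≤ ∑ _i ∈ Finset.range (n+1), (1:ℝ) := Finset.sum_le_sum (fun i _ => hcon i)
      _ = ((n:ℝ)+1) := by simp
  refine measure_mono_null hsub (measure_iUnion_null (fun i => ?_))
  have heq : {ω | 1 < |Y i ω|} = Y i ⁻¹' {x : ℝ | 1 < |x|} := rfl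
  rw [heq, ← Measure.map_apply (hYm i) measurableSet_absgt, hmarg i,
    stepDist_apply measurableSet_absgt]
  have h1 : sg true ∉ {x : ℝ | 1 < |x|} := by simp [sg]
  have h2 : sg false ∉ {x : ℝ | 1 < |x|} := by simp [sg]
  rw [if_neg h1, if_neg h2]
  simp

lemma integral_mono_of_upper (ν' ν : Measure (ℕ → ℝ)) [IsProbabilityMeasure ν']
    [IsProbabilityMeasure ν]
    (hupper : ∀ A : Set (ℕ → ℝ), MeasurableSet A → IsUpperSet A → ν' A ≤ ν A)
    (f : (ℕ → ℝ) → ℝ) (hf : Measurable f) (hmono : Monotone f)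
    (C : ℝ) (hbdd : ∀ x, |f x| ≤ C) :
    ∫ x, f x ∂ν' ≤ ∫ x, f x ∂ν := by
  set g : (ℕ → ℝ) → ℝ := fun x => f x + C with hgdef
  have hgmeas : Measurable g := hf.add_const C
  have hg0 : ∀ x, 0 ≤ g x := fun x => by
    have := abs_le.mp (hbdd x); simp only [hgdef]; linarith [this.1]
  have hg2C : ∀ x, g x ≤ 2*C := fun x => by
    have := abs_le.mp (hbdd x); simp only [hgdef]; linarith [this.2]
  have hfint : ∀ (m : Measure (ℕ → ℝ)) [IsProbabilityMeasure m], Integrable f m := by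
    intro m _
    refine Integrable.mono' (integrable_const C) hf.aestronglyMeasurable ?_
    exact Filter.Eventually.of_forall (fun x => by simpa using hbdd x)
  have hgint : ∀ (m : Measure (ℕ → ℝ)) [IsProbabilityMeasure m], Integrable g m :=
    fun m _ => (hfint m).add (integrable_const C)
  have hkey : ∫ x, g x ∂ν' ≤ ∫ x, g x ∂ν := by
    rw [Integrable.integral_eq_integral_meas_lt (hgint ν') (Filter.Eventually.of_forall hg0),
      Integrable.integral_eq_integral_meas_lt (hgint ν) (Filter.Eventually.of_forall hg0)]
    have hmeasfun : ∀ (m : Measure (ℕ → ℝ)),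
        Measurable (fun t : ℝ => (m {a | t < g a}).toReal) := by
      intro m
      refine Measurable.ennreal_toReal ?_
      exact Antitone.measurable (fun s t hst => measure_mono (fun a h => lt_of_le_of_lt hst h))
    refine integral_mono_of_nonneg (Filter.Eventually.of_forall (fun t => ENNReal.toReal_nonneg))
      ?_ ?_
    · -- integrability of the ν-side integrand on Ioi 0
      refine Integrable.mono'
        (g := (Set.Ioc (0:ℝ) (2*C)).indicator (fun _ => (1:ℝ)))
        ((integrable_indicator_iff measurableSet_Ioc).mpr
          (integrableOn_const measure_Ioc_lt_top.ne))
        ((hmeasfun ν).aestronglyMeasurable) ?_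
      · refine (ae_restrict_iff' measurableSet_Ioi).mpr
          (Filter.Eventually.of_forall (fun t ht => ?_))
        by_cases h2 : t ≤ 2*C
        · have : (Set.Ioc (0:ℝ) (2*C)).indicator (fun _ => (1:ℝ)) t = 1 := by
            rw [Set.indicator_of_mem (Set.mem_Ioc.mpr ⟨Set.mem_Ioi.mp ht, h2⟩)]
          rw [this]
          rw [Real.norm_eq_abs, abs_of_nonneg measureReal_nonneg]
          exact ENNReal.toReal_le_of_le_ofReal zero_le_one
            (by simpa using prob_le_one (μ := ν) (s := {a | t < g a}))
        · have hempty : {a | t < g a} = ∅ := by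
            ext a
            simp only [Set.mem_setOf_eq, Set.mem_empty_iff_false, iff_false, not_lt]
            exact le_trans (hg2C a) (le_of_not_ge h2)
          rw [hempty]
          simp only [measure_empty, measureReal_empty, ENNReal.toReal_zero, norm_zero, Set.indicator_apply]
          split <;> norm_num
    · refine (ae_restrict_iff' measurableSet_Ioi).mpr
        (Filter.Eventually.of_forall (fun t _ => ?_))
      refine ENNReal.toReal_mono (measure_ne_top ν _) ?_
      refine hupper _ ?_ ?_
      · exact measurableSet_lt measurable_const hgmeas
      · intro x y hxy hx
        have hx' : t < g x := hx
        have hgy : g x ≤ g y := add_le_add_left (hmono hxy) C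
        exact lt_of_lt_of_le hx' hgy
  have hsplit : ∀ (m : Measure (ℕ → ℝ)) [IsProbabilityMeasure m],
      ∫ x, g x ∂m = ∫ x, f x ∂m + C := by
    intro m _
    rw [integral_add (hfint m) (integrable_const C), integral_const]
    simp
  rw [hsplit ν', hsplit ν] at hkey
  linarith


section Core

variable {Ω' Ω : Type*} [MeasurableSpace Ω'] [MeasurableSpace Ω]

lemma indicator_monotone {M : ℕ} {S : Set (Fin M → ℝ)} (hSu : IsUpperSet S) :
    Monotone (fun v => if v ∈ S then (1:ℝ) else 0) := by
  intro x y hxy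
  dsimp only
  by_cases h : x ∈ S
  · rw [if_pos h, if_pos (hSu hxy h)]
  · rw [if_neg h]
    split <;> norm_num

lemma core_theorem (μ' : Measure Ω') (μ : Measure Ω)
    [IsProbabilityMeasure μ'] [IsProbabilityMeasure μ]
    (p : ℝ) (hp2 : 1/2 ≤ p) (hp1 : p ≤ 1)
    (Y' : ℕ → Ω' → ℝ) (Y : ℕ → Ω → ℝ)
    (hY'meas : ∀ i, Measurable (Y' i)) (hYmeas : ∀ i, Measurable (Y i))
    (hY'indep : iIndepFun Y' μ')
    (hYindep : iIndepFun Y μ)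
    (hY'0dist : Measure.map (Y' 0) μ' = stepDist (1/2))
    (hY0dist : Measure.map (Y 0) μ = stepDist (1/2))
    (hY'dist : ∀ i, Measure.map (Y' (i + 1)) μ' = stepDist (1/2))
    (hYdist : ∀ i, Measure.map (Y (i + 1)) μ = stepDist p)
    (f : (ℕ → ℝ) → ℝ) (hfmeas : Measurable f) (hfmono : Monotone f)
    (C : ℝ) (hfbdd : ∀ x, |f x| ≤ C) :
    ∫ ω, f (fun n => |∑ i ∈ Finset.range (n + 1), Y' i ω|) ∂μ'
      ≤ ∫ ω, f (fun n => |∑ i ∈ Finset.range (n + 1), Y i ω|) ∂μ := by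
  have hq0 : (0:ℝ) ≤ 1 - p := by linarith
  have hqp : 1 - p ≤ p := by linarith
  have hpq1 : p + (1 - p) = 1 := by ring
  have hp0 : (0:ℝ) ≤ p := by linarith
  set ν' : Measure (ℕ → ℝ) := μ'.map (pathMap Y') with hν'
  set ν : Measure (ℕ → ℝ) := μ.map (pathMap Y) with hν
  haveI : IsProbabilityMeasure ν' :=
    Measure.isProbabilityMeasure_map (measurable_pathMap hY'meas).aemeasurable
  haveI : IsProbabilityMeasure ν :=
    Measure.isProbabilityMeasure_map (measurable_pathMap hYmeas).aemeasurable
  have hmarg' : ∀ i : ℕ, μ'.map (Y' i) = stepDist (1/2) := by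
    intro i; cases i with
    | zero => exact hY'0dist
    | succ n => exact hY'dist n
  have hmargN : ∀ i : ℕ, μ.map (Y i) = stepDist (if i = 0 then 1/2 else p) := by
    intro i; cases i with
    | zero => simpa using hY0dist
    | succ n => simpa using hYdist n
  -- cylinder dominance
  have hcyl : ∀ (N : ℕ) (S : Set (Fin (N+1) → ℝ)), MeasurableSet S → IsUpperSet S →
      ν' ((proj (N+1)) ⁻¹' S) ≤ ν ((proj (N+1)) ⁻¹' S) := by
    intro N S hS hSu
    set g : (Fin (N+1) → ℝ) → ℝ := fun v => if v ∈ S then (1:ℝ) else 0 with hg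
    have hgmono : Monotone g := indicator_monotone hSu
    have hbound' : ∀ i : Fin (N+1), 0 ≤ (1:ℝ)/2 ∧ (1:ℝ)/2 ≤ 1 := fun _ => by norm_num
    have hboundp : ∀ i : Fin (N+1),
        0 ≤ (if (i:ℕ) = 0 then (1:ℝ)/2 else p) ∧ (if (i:ℕ) = 0 then (1:ℝ)/2 else p) ≤ 1 := by
      intro i; split <;> constructor <;> norm_num <;> linarith
    have hL := map_cylinder_eq μ' Y' hY'meas hY'indep (N+1)
      (fun _ => (1:ℝ)/2) hbound' (fun i => hmarg' (i:ℕ)) S hS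
    have hR := map_cylinder_eq μ Y hYmeas hYindep (N+1)
      (fun i => if (i:ℕ) = 0 then (1:ℝ)/2 else p) hboundp
      (fun i => hmargN (i:ℕ)) S hS
    rw [hν', hν, hL, hR]
    have hW' : (fun (i : Fin (N+1)) b => stepW ((1:ℝ)/2) b) =
        (fun (_ : Fin (N+1)) (_ : Bool) => (1/2:ℝ)) := by
      funext i b; cases b <;> norm_num [stepW]
    have hW : (fun (i : Fin (N+1)) b => stepW (if (i:ℕ) = 0 then (1:ℝ)/2 else p) b)
        = Wp p (1-p) := by
      funext i b
      by_cases hi : (i:ℕ) = 0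
      · have hi' : i = 0 := by exact Fin.ext hi
        cases b <;> simp [stepW, Wp, hi, hi'] <;> norm_num
      · have hi' : ¬ (i = 0) := fun h => hi (by rw [h]; rfl)
        cases b <;> simp [stepW, Wp, hi, hi']
    rw [hW', hW]
    exact ENNReal.ofReal_le_ofReal (sum_FD hq0 hqp hpq1 N g hgmono)
  have hK' : ν' KKᶜ = 0 :=
    pathMap_mem_KK μ' Y' hY'meas (fun _ => 1/2) hmarg'
  have hK : ν KKᶜ = 0 :=
    pathMap_mem_KK μ Y hYmeas (fun i => if i = 0 then 1/2 else p) hmargN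
  have hupper := upper_dominance ν' ν hcyl hK' hK
  have hint := integral_mono_of_upper ν' ν hupper f hfmeas hfmono C hfbdd
  rw [hν', hν, integral_map (measurable_pathMap hY'meas).aemeasurable
    hfmeas.aestronglyMeasurable, integral_map (measurable_pathMap hYmeas).aemeasurable
    hfmeas.aestronglyMeasurable] at hint
  exact hint

lemma stepDist_neg (r : ℝ) :
    Measure.map (fun x : ℝ => -x) (stepDist r) = stepDist (1 - r) := by
  rw [stepDist, stepDist]
  rw [Measure.map_add _ _ measurable_neg]
  rw [Measure.map_smul, Measure.map_smul]
  rw [Measure.map_dirac' measurable_neg, Measure.map_dirac' measurable_neg]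
  rw [show (1 - (1 - r)) = r by ring]
  rw [show -(1:ℝ) = (-1:ℝ) by norm_num, show -(-1:ℝ) = (1:ℝ) by norm_num]
  exact add_comm _ _

end Core

end

end HalfWalkAux


open HalfWalkAux in
/-- **Theorem 2.** Consider the walk `U^p_n = X_0 + S^p_n` with random initial state
`X_0 = ±1` with equal probabilities, independent of the increments.  Here the walk with
parameter `p` is modelled by `Y 0 = X_0` and increments `Y 1, Y 2, …`, all independent, with
`Y 0 ~ stepDist (1/2)` and `Y (i+1) ~ stepDist p`, so that `U^p_n = ∑_{i ≤ n} Y i`.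
For `p' = 1/2` and any `p ∈ [0,1]` with `p ≠ 1/2`, the process `(|U^{p'}_n|)_{n ≥ 0}`
is stochastically smaller than `(|U^{p}_n|)_{n ≥ 0}`; consequently `(|U^{p}_n|)_{n ≥ 0}` is
stochastically minimized over `p ∈ [0,1]` by `p = 1/2`. -/
theorem half_walk_abs_stochastically_minimal
    {Ω' Ω : Type*} [MeasurableSpace Ω'] [MeasurableSpace Ω]
    (μ' : Measure Ω') (μ : Measure Ω)
    [IsProbabilityMeasure μ'] [IsProbabilityMeasure μ]
    (p : ℝ) (hp : p ∈ Set.Icc (0 : ℝ) 1) (hphalf : p ≠ 1/2)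
    (Y' : ℕ → Ω' → ℝ) (Y : ℕ → Ω → ℝ)
    (hY'meas : ∀ i, Measurable (Y' i)) (hYmeas : ∀ i, Measurable (Y i))
    (hY'indep : iIndepFun Y' μ')
    (hYindep : iIndepFun Y μ)
    (hY'0dist : Measure.map (Y' 0) μ' = stepDist (1/2))
    (hY0dist : Measure.map (Y 0) μ = stepDist (1/2))
    (hY'dist : ∀ i, Measure.map (Y' (i + 1)) μ' = stepDist (1/2))
    (hYdist : ∀ i, Measure.map (Y (i + 1)) μ = stepDist p)
    (f : (ℕ → ℝ) → ℝ) (hfmeas : Measurable f) (hfmono : Monotone f)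
    (C : ℝ) (hfbdd : ∀ x, |f x| ≤ C) :
    ∫ ω, f (fun n => |∑ i ∈ Finset.range (n + 1), Y' i ω|) ∂μ'
      ≤ ∫ ω, f (fun n => |∑ i ∈ Finset.range (n + 1), Y i ω|) ∂μ := by
  rcases le_or_gt (1/2 : ℝ) p with hge | hlt
  · exact core_theorem μ' μ p hge hp.2 Y' Y hY'meas hYmeas hY'indep hYindep
      hY'0dist hY0dist hY'dist hYdist f hfmeas hfmono C hfbdd
  · -- flip the signs of the increments: |walk| is unchanged, parameter becomes 1 - p
    set Z : ℕ → Ω → ℝ := fun i ω => -(Y i ω) with hZ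
    have hZmeas : ∀ i, Measurable (Z i) := fun i => (hYmeas i).neg
    have hZindep : iIndepFun Z μ :=
      hYindep.comp (fun _ x => -x) (fun _ => measurable_neg)
    have hmapZ : ∀ i, Measure.map (Z i) μ = Measure.map (fun x : ℝ => -x) (Measure.map (Y i) μ) := by
      intro i
      rw [Measure.map_map measurable_neg (hYmeas i)]
      rfl
    have hZ0dist : Measure.map (Z 0) μ = stepDist (1/2) := by
      rw [hmapZ 0, hY0dist, stepDist_neg]
      norm_num
    have hZdist : ∀ i, Measure.map (Z (i+1)) μ = stepDist (1 - p) := by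
      intro i
      rw [hmapZ (i+1), hYdist i, stepDist_neg]
    have heq : ∫ ω, f (fun n => |∑ i ∈ Finset.range (n + 1), Y i ω|) ∂μ
        = ∫ ω, f (fun n => |∑ i ∈ Finset.range (n + 1), Z i ω|) ∂μ := by
      refine integral_congr_ae (Filter.Eventually.of_forall (fun ω => ?_))
      show f _ = f _
      congr 1
      funext n
      rw [show ∑ i ∈ Finset.range (n + 1), Z i ω = -∑ i ∈ Finset.range (n + 1), Y i ω by
        simp [hZ], abs_neg]
    rw [heq]
    exact core_theorem μ' μ (1-p) (by linarith) (by linarith [hp.1]) Y' Z hY'meas hZmeas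
      hY'indep hZindep hY'0dist hZ0dist hY'dist hZdist f hfmeas hfmono C hfbdd
end

section
/- For non-negative integers b_n (n ≥ 1), the stopping time T^p = inf{n ≥ 1 : |S_n^p| ≥ b_n} is stochastically increasing in p ∈ [0,1/2] and stochastically decreasing in p ∈ [1/2,1]; that is, for |p' - 1/2| > |p'' - 1/2| and every m ≥ 1, P(T^{p'} > m) ≤ P(T^{p''} > m). -/
open MeasureTheory ProbabilityTheory Finset

namespace BWalk

/-- forward path weights -/
noncomputable def hfun (p : ℝ) (b : ℕ → ℕ) : ℕ → ℤ → ℝ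
  | 0, x => if x = 0 then 1 else 0
  | n+1, x => if |x| < (b (n+1) : ℤ) then
      p * hfun p b n (x-1) + (1-p) * hfun p b n (x+1) else 0

noncomputable def sfun (p : ℝ) (x : ℕ) : ℝ := p ^ x + (1-p) ^ x

noncomputable def phi (p : ℝ) (x : ℕ) : ℝ := sfun p (x+1) / sfun p x

def npred : ℕ → ℕ
  | 0 => 1
  | k+1 => k

/-- backward value function; `Vfun p b m j x` is survival prob with `j` steps
remaining, i.e. at time `n = m - j`, current `|S| = x`. -/
noncomputable def Vfun (p : ℝ) (b : ℕ → ℕ) (m : ℕ) : ℕ → ℕ → ℝ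
  | 0, _ => 1
  | j+1, x =>
      phi p x * (if x + 1 < b (m - j) then Vfun p b m j (x+1) else 0)
      + (1 - phi p x) * (if npred x < b (m - j) then Vfun p b m j (npred x) else 0)

section sphi

variable {p : ℝ} (hp0 : 0 ≤ p) (hp1 : p ≤ 1)
include hp0 hp1

lemma sfun_pos (x : ℕ) : 0 < sfun p x := by
  rcases eq_or_lt_of_le hp0 with h | h
  · simp [sfun, ← h]
    positivity
  · have : 0 < p ^ x := pow_pos h x
    have : (0:ℝ) ≤ (1-p) ^ x := pow_nonneg (by linarith) x
    unfold sfun; linarith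

lemma phi_le_one (x : ℕ) : phi p x ≤ 1 := by
  rw [phi, div_le_one (sfun_pos hp0 hp1 x)]
  have h1 : p ^ (x+1) = p ^ x * p := pow_succ p x
  have h2 : (1-p) ^ (x+1) = (1-p) ^ x * (1-p) := pow_succ (1-p) x
  have h3 : (0:ℝ) ≤ p ^ x := pow_nonneg hp0 x
  have h4 : (0:ℝ) ≤ (1-p) ^ x := pow_nonneg (by linarith) x
  unfold sfun
  nlinarith

lemma half_le_phi (x : ℕ) : 1/2 ≤ phi p x := by
  rw [phi, le_div_iff₀ (sfun_pos hp0 hp1 x)]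
  have key : 0 ≤ (p ^ x - (1-p) ^ x) * (p - (1-p)) := by
    rcases le_total p (1-p) with h | h
    · have h5 := pow_le_pow_left₀ hp0 h x
      nlinarith [mul_nonneg (sub_nonneg.2 h5) (sub_nonneg.2 h)]
    · have h5 := pow_le_pow_left₀ (by linarith : (0:ℝ) ≤ 1-p) h x
      exact mul_nonneg (by linarith) (by linarith)
  have h1 : p ^ (x+1) = p ^ x * p := pow_succ p x
  have h2 : (1-p) ^ (x+1) = (1-p) ^ x * (1-p) := pow_succ (1-p) x
  unfold sfun
  nlinarith

lemma phi_nonneg (x : ℕ) : 0 ≤ phi p x := le_trans (by norm_num) (half_le_phi hp0 hp1 x)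

lemma one_sub_phi_nonneg (x : ℕ) : 0 ≤ 1 - phi p x := by
  have := phi_le_one hp0 hp1 x; linarith

lemma phi_mono (x : ℕ) : phi p x ≤ phi p (x+1) := by
  rw [phi, phi, div_le_div_iff₀ (sfun_pos hp0 hp1 x) (sfun_pos hp0 hp1 (x+1))]
  have key : sfun p (x+1+1) * sfun p x - sfun p (x+1) * sfun p (x+1)
      = p ^ x * (1-p) ^ x * (p - (1-p))^2 := by
    unfold sfun; ring
  have h3 : (0:ℝ) ≤ p ^ x := pow_nonneg hp0 x
  have h4 : (0:ℝ) ≤ (1-p) ^ x := pow_nonneg (by linarith) x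
  have h5 := mul_nonneg (mul_nonneg h3 h4) (sq_nonneg (p - (1-p)))
  linarith

end sphi

lemma sfun_rec (p : ℝ) (x : ℕ) :
    sfun p (x+2) = sfun p (x+1) - p * (1-p) * sfun p x := by
  unfold sfun; ring

lemma sfun_cross {p' p'' : ℝ} (hp'0 : 0 ≤ p') (hp'1 : p' ≤ 1)
    (hp''0 : 0 ≤ p'') (hp''1 : p'' ≤ 1)
    (hq : p' * (1-p') ≤ p'' * (1-p'')) (x : ℕ) :
    sfun p'' (x+1) * sfun p' x ≤ sfun p' (x+1) * sfun p'' x := by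
  induction x with
  | zero => simp [sfun]
  | succ x ih =>
      have h1 := sfun_rec p' x
      have h2 := sfun_rec p'' x
      have e2 : 0 ≤ p'' * (1-p'') := mul_nonneg hp''0 (by linarith)
      have s1 : 0 ≤ sfun p' x := (sfun_pos hp'0 hp'1 x).le
      have s2 : 0 ≤ sfun p'' (x+1) := (sfun_pos hp''0 hp''1 (x+1)).le
      have keyid : sfun p' (x+1+1) * sfun p'' (x+1) - sfun p'' (x+1+1) * sfun p' (x+1)
          = p''*(1-p'') * (sfun p' (x+1) * sfun p'' x - sfun p'' (x+1) * sfun p' x)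
            + (p''*(1-p'') - p'*(1-p')) * (sfun p' x * sfun p'' (x+1)) := by
        rw [show x+1+1 = x+2 from rfl, h1, h2]; ring
      have t1 := mul_nonneg e2 (sub_nonneg.2 ih)
      have t2 := mul_nonneg (sub_nonneg.2 hq) (mul_nonneg s1 s2)
      linarith

lemma phi_cross {p' p'' : ℝ} (hp'0 : 0 ≤ p') (hp'1 : p' ≤ 1)
    (hp''0 : 0 ≤ p'') (hp''1 : p'' ≤ 1)
    (hq : p' * (1-p') ≤ p'' * (1-p'')) (x : ℕ) :
    phi p'' x ≤ phi p' x := by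
  rw [phi, phi, div_le_div_iff₀ (sfun_pos hp''0 hp''1 x) (sfun_pos hp'0 hp'1 x)]
  have := sfun_cross hp'0 hp'1 hp''0 hp''1 hq x
  nlinarith


noncomputable def Wif (c : ℕ) (f : ℕ → ℝ) (y : ℕ) : ℝ := if y < c then f y else 0

lemma Vfun_succ (p : ℝ) (b : ℕ → ℕ) (m j : ℕ) (x : ℕ) :
    Vfun p b m (j+1) x = phi p x * Wif (b (m - j)) (Vfun p b m j) (x+1)
      + (1 - phi p x) * Wif (b (m - j)) (Vfun p b m j) (npred x) := rfl

lemma Wif_nonneg {c : ℕ} {f : ℕ → ℝ} (hf : ∀ y, 0 ≤ f y) (y : ℕ) : 0 ≤ Wif c f y := by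
  unfold Wif; split <;> simp [hf]

lemma Wif_le_one {c : ℕ} {f : ℕ → ℝ} (hf : ∀ y, f y ≤ 1) (y : ℕ) : Wif c f y ≤ 1 := by
  unfold Wif; split <;> [exact hf y; norm_num]

lemma Wif_anti2 {c : ℕ} {f : ℕ → ℝ} (hf0 : ∀ y, 0 ≤ f y)
    (hfa : ∀ y, f (y+2) ≤ f y) (y : ℕ) : Wif c f (y+2) ≤ Wif c f y := by
  unfold Wif
  by_cases h' : y + 2 < c
  · rw [if_pos h', if_pos (by omega)]
    exact hfa y
  · rw [if_neg h']; split <;> simp [hf0]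

lemma Wif_mono_f {c : ℕ} {f g : ℕ → ℝ} (hfg : ∀ y, f y ≤ g y) (y : ℕ) :
    Wif c f y ≤ Wif c g y := by
  unfold Wif; split <;> simp [hfg]

section Vlem

variable {p : ℝ} (b : ℕ → ℕ) (m : ℕ) (hp0 : 0 ≤ p) (hp1 : p ≤ 1)
include hp0 hp1

lemma Vfun_bounds : ∀ j x, 0 ≤ Vfun p b m j x ∧ Vfun p b m j x ≤ 1
  | 0, x => by simp [Vfun]
  | j+1, x => by
      have hA0 := Wif_nonneg (c := b (m-j)) (fun y => (Vfun_bounds j y).1) (x+1)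
      have hA1 := Wif_le_one (c := b (m-j)) (fun y => (Vfun_bounds j y).2) (x+1)
      have hB0 := Wif_nonneg (c := b (m-j)) (fun y => (Vfun_bounds j y).1) (npred x)
      have hB1 := Wif_le_one (c := b (m-j)) (fun y => (Vfun_bounds j y).2) (npred x)
      have hφ0 := phi_nonneg hp0 hp1 x
      have hφ1 := phi_le_one hp0 hp1 x
      rw [Vfun_succ]
      constructor
      · have := mul_nonneg hφ0 hA0
        have := mul_nonneg (by linarith : (0:ℝ) ≤ 1 - phi p x) hB0
        linarith
      · nlinarith

lemma Vfun_anti2 : ∀ j x, Vfun p b m j (x+2) ≤ Vfun p b m j x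
  | 0, x => by simp [Vfun]
  | j+1, x => by
      have hV0 : ∀ y, 0 ≤ Vfun p b m j y := fun y => (Vfun_bounds b m hp0 hp1 j y).1
      have ha : ∀ y, Vfun p b m j (y+2) ≤ Vfun p b m j y :=
        fun y => Vfun_anti2 j y
      set W := Wif (b (m-j)) (Vfun p b m j) with hW
      have hW1 : W (x+3) ≤ W (x+1) := Wif_anti2 hV0 ha (x+1)
      have hW3 : W (x+1) ≤ W (npred x) := by
        cases x with
        | zero => exact le_refl _
        | succ k => exact Wif_anti2 hV0 ha k
      have hφm : phi p x ≤ phi p (x+2) :=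
        le_trans (phi_mono hp0 hp1 x) (phi_mono hp0 hp1 (x+1))
      have hφ0 := phi_nonneg hp0 hp1 x
      have hφ1 := phi_le_one hp0 hp1 x
      have hφ0' := phi_nonneg hp0 hp1 (x+2)
      have hφ1' := phi_le_one hp0 hp1 (x+2)
      rw [Vfun_succ, Vfun_succ]
      show phi p (x+2) * W (x+2+1) + (1 - phi p (x+2)) * W (npred (x+2))
        ≤ phi p x * W (x+1) + (1 - phi p x) * W (npred x)
      have hnp : npred (x+2) = x+1 := rfl
      rw [hnp, show x+2+1 = x+3 from rfl]
      nlinarith [mul_nonneg (sub_nonneg.2 hφm) (sub_nonneg.2 hW1),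
        mul_le_mul_of_nonneg_left hW1 hφ0,
        mul_le_mul_of_nonneg_left hW3 (by linarith : (0:ℝ) ≤ 1 - phi p x)]

end Vlem

lemma Vfun_cross (b : ℕ → ℕ) (m : ℕ) {p' p'' : ℝ}
    (hp'0 : 0 ≤ p') (hp'1 : p' ≤ 1) (hp''0 : 0 ≤ p'') (hp''1 : p'' ≤ 1)
    (hq : p' * (1-p') ≤ p'' * (1-p'')) :
    ∀ j x, Vfun p' b m j x ≤ Vfun p'' b m j x
  | 0, x => by simp [Vfun]
  | j+1, x => by
      have hV''0 : ∀ y, 0 ≤ Vfun p'' b m j y := fun y => (Vfun_bounds b m hp''0 hp''1 j y).1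
      have ih : ∀ y, Vfun p' b m j y ≤ Vfun p'' b m j y :=
        fun y => Vfun_cross b m hp'0 hp'1 hp''0 hp''1 hq j y
      set W' := Wif (b (m-j)) (Vfun p' b m j) with hWd'
      set W'' := Wif (b (m-j)) (Vfun p'' b m j) with hWd''
      have hWm1 : W' (x+1) ≤ W'' (x+1) := Wif_mono_f ih _
      have hWm2 : W' (npred x) ≤ W'' (npred x) := Wif_mono_f ih _
      have hWa : W'' (x+1) ≤ W'' (npred x) := by
        cases x with
        | zero => exact le_refl _
        | succ k =>
            exact Wif_anti2 hV''0 (fun y => Vfun_anti2 b m hp''0 hp''1 j y) k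
      have hφc := phi_cross hp'0 hp'1 hp''0 hp''1 hq x
      have hφ'0 := phi_nonneg hp'0 hp'1 x
      have hφ'1 := phi_le_one hp'0 hp'1 x
      have hφ''0 := phi_nonneg hp''0 hp''1 x
      rw [Vfun_succ, Vfun_succ]
      nlinarith [mul_le_mul_of_nonneg_left hWm1 hφ'0,
        mul_le_mul_of_nonneg_left hWm2 (by linarith : (0:ℝ) ≤ 1 - phi p' x),
        mul_nonneg (sub_nonneg.2 hφc) (sub_nonneg.2 hWa)]

section hlem

variable {p : ℝ} (b : ℕ → ℕ)

lemma hfun_nonneg (hp0 : 0 ≤ p) (hp1 : p ≤ 1) : ∀ n x, 0 ≤ hfun p b n x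
  | 0, x => by unfold hfun; split <;> norm_num
  | n+1, x => by
      unfold hfun
      split
      · have h1 := hfun_nonneg hp0 hp1 n (x-1)
        have h2 := hfun_nonneg hp0 hp1 n (x+1)
        have : (0:ℝ) ≤ 1 - p := by linarith
        positivity
      · exact le_refl 0

lemma hfun_supp : ∀ (n : ℕ) (x : ℤ), (n:ℤ) < |x| → hfun p b n x = 0 := by
  intro n
  induction n with
  | zero =>
      intro x hx
      have : x ≠ 0 := by
        intro h; rw [h] at hx; simp at hx
      simp [hfun, this]
  | succ n ih =>
      intro x hx
      have a1 : |x| - |(1:ℤ)| ≤ |x - 1| := abs_sub_abs_le_abs_sub x 1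
      have a2 : |x| - |(1:ℤ)| ≤ |x + 1| := by
        have := abs_sub_abs_le_abs_sub x (-1)
        simpa [sub_neg_eq_add] using this
      rw [abs_one] at a1 a2
      have hc : ((n:ℤ)+1) < |x| := by push_cast at hx; linarith
      have h1 : hfun p b n (x-1) = 0 := ih (x-1) (by linarith)
      have h2 : hfun p b n (x+1) = 0 := ih (x+1) (by linarith)
      unfold hfun
      split <;> simp [h1, h2]

lemma hfun_symm : ∀ n (k : ℕ),
    (1-p)^k * hfun p b n (k:ℤ) = p^k * hfun p b n (-(k:ℤ))
  | 0, k => by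
      cases k with
      | zero => norm_num
      | succ k' =>
          have h1 : ((k'+1 : ℕ) : ℤ) ≠ 0 := by exact_mod_cast Nat.succ_ne_zero k'
          have h2 : (-((k'+1 : ℕ) : ℤ)) ≠ 0 := neg_ne_zero.2 h1
          unfold hfun
          rw [if_neg h1, if_neg h2]
          ring
  | n+1, k => by
      have habs : |(k:ℤ)| = |(-(k:ℤ))| := by rw [abs_neg]
      unfold hfun
      rw [← habs]
      by_cases hc : |(k:ℤ)| < (b (n+1) : ℤ)
      · rw [if_pos hc, if_pos hc]
        cases k with
        | zero => norm_num
        | succ k' =>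
            have IH1 := hfun_symm n k'
            have IH2 := hfun_symm n (k'+2)
            have e1 : ((k'+1 : ℕ) : ℤ) - 1 = (k' : ℤ) := by push_cast; ring
            have e2 : ((k'+1 : ℕ) : ℤ) + 1 = ((k'+2 : ℕ) : ℤ) := by push_cast; ring
            have e3 : -((k'+1 : ℕ) : ℤ) - 1 = -((k'+2 : ℕ) : ℤ) := by push_cast; ring
            have e4 : -((k'+1 : ℕ) : ℤ) + 1 = -((k' : ℕ) : ℤ) := by push_cast; ring
            rw [e1, e2, e3, e4]
            linear_combination p*(1-p)*IH1 + IH2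
      · rw [if_neg hc, if_neg hc]
        ring

end hlem

section shifts

lemma sum_Icc_reindex (a c d : ℤ) (F : ℤ → ℝ) :
    ∑ x ∈ Icc (a+d) (c+d), F x = ∑ x ∈ Icc a c, F (x + d) := by
  rw [← Finset.map_add_right_Icc, Finset.sum_map]
  rfl

lemma sum_kernel_a (M : ℤ) (hM : 0 ≤ M) (K : ℤ → ℝ) (hK : ∀ x, M ≤ |x| → K x = 0) :
    ∑ x ∈ Icc (-M-1) (M-1), K x = ∑ x ∈ Icc (-M) M, K x := by
  have h1 : ∑ x ∈ Icc (-M-1) (M-1), K x = ∑ x ∈ Icc (-M-1) M, K x := by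
    apply Finset.sum_subset (Finset.Icc_subset_Icc le_rfl (by linarith))
    intro x hx hx'
    simp only [Finset.mem_Icc] at hx hx'
    have : x = M := by omega
    exact hK x (by rw [this, abs_of_nonneg hM])
  have h2 : ∑ x ∈ Icc (-M) M, K x = ∑ x ∈ Icc (-M-1) M, K x := by
    apply Finset.sum_subset (Finset.Icc_subset_Icc (by linarith) le_rfl)
    intro x hx hx'
    simp only [Finset.mem_Icc] at hx hx'
    have : x = -M-1 := by omega
    exact hK x (by rw [this]; rw [abs_of_nonpos (by linarith)]; linarith)
  rw [h1, h2]

lemma sum_kernel_b (M : ℤ) (hM : 0 ≤ M) (K : ℤ → ℝ) (hK : ∀ x, M ≤ |x| → K x = 0) :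
    ∑ x ∈ Icc (-M+1) (M+1), K x = ∑ x ∈ Icc (-M) M, K x := by
  have h1 : ∑ x ∈ Icc (-M+1) (M+1), K x = ∑ x ∈ Icc (-M) (M+1), K x := by
    apply Finset.sum_subset (Finset.Icc_subset_Icc (by linarith) le_rfl)
    intro x hx hx'
    simp only [Finset.mem_Icc] at hx hx'
    have : x = -M := by omega
    exact hK x (by rw [this, abs_neg, abs_of_nonneg hM])
  have h2 : ∑ x ∈ Icc (-M) M, K x = ∑ x ∈ Icc (-M) (M+1), K x := by
    apply Finset.sum_subset (Finset.Icc_subset_Icc le_rfl (by linarith))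
    intro x hx hx'
    simp only [Finset.mem_Icc] at hx hx'
    have : x = M+1 := by omega
    exact hK x (by rw [this, abs_of_nonneg (by linarith)]; linarith)
  rw [h1, ← h2]

lemma sum_shift_right (M : ℤ) (hM : 0 ≤ M) (F G : ℤ → ℝ) (hF : ∀ x, M ≤ |x| → F x = 0) :
    ∑ x ∈ Icc (-M) M, F (x-1) * G x = ∑ x ∈ Icc (-M) M, F x * G (x+1) := by
  have e1 : ∑ x ∈ Icc (-M-1) (M-1), F x * G (x+1)
      = ∑ x ∈ Icc (-M) M, F (x + (-1)) * G ((x + (-1)) + 1) := by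
    have := sum_Icc_reindex (-M) M (-1) (fun y => F y * G (y+1))
    simpa [sub_eq_add_neg] using this
  rw [← sum_kernel_a M hM (fun y => F y * G (y+1)) (fun x hx => by simp [hF x hx]), e1]
  exact Finset.sum_congr rfl fun x _ => by
    rw [show x + (-1) = x - 1 by ring, show x - 1 + 1 = x by ring]

lemma sum_shift_left (M : ℤ) (hM : 0 ≤ M) (F G : ℤ → ℝ) (hF : ∀ x, M ≤ |x| → F x = 0) :
    ∑ x ∈ Icc (-M) M, F (x+1) * G x = ∑ x ∈ Icc (-M) M, F x * G (x-1) := by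
  have e1 : ∑ x ∈ Icc (-M+1) (M+1), F x * G (x-1)
      = ∑ x ∈ Icc (-M) M, F (x + 1) * G ((x + 1) - 1) := by
    have := sum_Icc_reindex (-M) M 1 (fun y => F y * G (y-1))
    simpa using this
  rw [← sum_kernel_b M hM (fun y => F y * G (y-1)) (fun x hx => by simp [hF x hx]), e1]
  exact Finset.sum_congr rfl fun x _ => by
    rw [show x + 1 - 1 = x by ring]

lemma sum_Icc_neg (M : ℤ) (G : ℤ → ℝ) :
    ∑ x ∈ Icc (-M) M, G x = ∑ x ∈ Icc (-M) M, G (-x) := by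
  refine Finset.sum_nbij' (fun x => -x) (fun x => -x) ?_ ?_ ?_ ?_ ?_ <;>
    intro x hx <;> simp_all [Finset.mem_Icc] <;> omega

end shifts

section keystep

variable {p : ℝ} (b : ℕ → ℕ) (m : ℕ)

lemma ite_cast_lt (a c : ℕ) (r v : ℝ) :
    (if ((a:ℕ):ℤ) < ((c:ℕ):ℤ) then v else r) = if a < c then v else r := by
  by_cases h : a < c
  · rw [if_pos (by exact_mod_cast h), if_pos h]
  · rw [if_neg (by exact_mod_cast h), if_neg h]

lemma pair_L1 (hp0 : 0 ≤ p) (hp1 : p ≤ 1) (n : ℕ) (k : ℕ) :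
    p * hfun p b n (k:ℤ) + (1-p) * hfun p b n (-(k:ℤ))
      = phi p k * (hfun p b n (k:ℤ) + hfun p b n (-(k:ℤ))) := by
  have hC := hfun_symm (p := p) b n k
  have hs := (sfun_pos hp0 hp1 k).ne'
  rw [phi, div_mul_eq_mul_div, eq_div_iff hs]
  unfold sfun
  linear_combination (p - (1-p)) * hC

lemma pair_L2 (hp0 : 0 ≤ p) (hp1 : p ≤ 1) (n : ℕ) (k : ℕ) :
    (1-p) * hfun p b n (k:ℤ) + p * hfun p b n (-(k:ℤ))
      = (1 - phi p k) * (hfun p b n (k:ℤ) + hfun p b n (-(k:ℤ))) := by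
  linear_combination (-1 : ℝ) * pair_L1 b hp0 hp1 n k

lemma keystep (hp0 : 0 ≤ p) (hp1 : p ≤ 1) (n j : ℕ) (hm : m = n + 1 + j) :
    ∑ x ∈ Icc (-(m:ℤ)) m, hfun p b (n+1) x * Vfun p b m j x.natAbs
    = ∑ x ∈ Icc (-(m:ℤ)) m, hfun p b n x * Vfun p b m (j+1) x.natAbs := by
  set Wz : ℤ → ℝ := fun y => if |y| < (b (n+1) : ℤ) then Vfun p b m j y.natAbs else 0 with hWz
  have hM : (0:ℤ) ≤ (m:ℤ) := by positivity
  have hsupp : ∀ x : ℤ, (m:ℤ) ≤ |x| → hfun p b n x = 0 := by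
    intro x hx
    apply hfun_supp
    have hnm : (n:ℤ) < (m:ℤ) := by exact_mod_cast (show n < m by omega)
    linarith
  have stepA : ∀ x : ℤ, hfun p b (n+1) x * Vfun p b m j x.natAbs
      = p * (hfun p b n (x-1) * Wz x) + (1-p) * (hfun p b n (x+1) * Wz x) := by
    intro x
    show hfun p b (n+1) x * Vfun p b m j x.natAbs
      = p * (hfun p b n (x-1) * (if |x| < (b (n+1) : ℤ) then Vfun p b m j x.natAbs else 0))
        + (1-p) * (hfun p b n (x+1) * (if |x| < (b (n+1) : ℤ) then Vfun p b m j x.natAbs else 0))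
    by_cases hc : |x| < (b (n+1) : ℤ)
    · rw [if_pos hc]
      show (if |x| < (b (n+1) : ℤ) then
          p * hfun p b n (x-1) + (1-p) * hfun p b n (x+1) else 0) * _ = _
      rw [if_pos hc]; ring
    · rw [if_neg hc]
      show (if |x| < (b (n+1) : ℤ) then
          p * hfun p b n (x-1) + (1-p) * hfun p b n (x+1) else 0) * _ = _
      rw [if_neg hc]; ring
  have e1 : ∑ x ∈ Icc (-(m:ℤ)) m, hfun p b (n+1) x * Vfun p b m j x.natAbs
      = ∑ x ∈ Icc (-(m:ℤ)) m, (p * (hfun p b n (x-1) * Wz x)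
        + (1-p) * (hfun p b n (x+1) * Wz x)) :=
    Finset.sum_congr rfl fun x _ => stepA x
  rw [e1, Finset.sum_add_distrib, ← Finset.mul_sum, ← Finset.mul_sum,
    sum_shift_right (m:ℤ) hM _ Wz hsupp, sum_shift_left (m:ℤ) hM _ Wz hsupp]
  have e2 : p * ∑ x ∈ Icc (-(m:ℤ)) m, hfun p b n x * Wz (x+1)
      + (1-p) * ∑ x ∈ Icc (-(m:ℤ)) m, hfun p b n x * Wz (x-1)
      = ∑ x ∈ Icc (-(m:ℤ)) m, hfun p b n x * (p * Wz (x+1) + (1-p) * Wz (x-1)) := by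
    rw [Finset.mul_sum, Finset.mul_sum, ← Finset.sum_add_distrib]
    exact Finset.sum_congr rfl fun x _ => by ring
  rw [e2]
  -- now the pairing argument
  have hmj : m - j = n + 1 := by omega
  have Wzneg : ∀ y : ℤ, Wz (-y) = Wz y := by
    intro y; rw [hWz]; simp only [abs_neg, Int.natAbs_neg]
  have pairK : ∀ k : ℕ,
      (hfun p b n ((k:ℤ)) * (p * Wz ((k:ℤ)+1) + (1-p) * Wz ((k:ℤ)-1))
        - hfun p b n ((k:ℤ)) * Vfun p b m (j+1) ((k:ℤ)).natAbs)
      + (hfun p b n (-(k:ℤ)) * (p * Wz (-(k:ℤ)+1) + (1-p) * Wz (-(k:ℤ)-1))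
        - hfun p b n (-(k:ℤ)) * Vfun p b m (j+1) ((-(k:ℤ))).natAbs) = 0 := by
    intro k
    have f1 : ((k:ℤ)).natAbs = k := Int.natAbs_natCast k
    have f2 : ((-(k:ℤ))).natAbs = k := by simp
    have w1 : Wz ((k:ℤ)+1) = Wif (b (n+1)) (Vfun p b m j) (k+1) := by
      rw [hWz]
      show (if |(k:ℤ)+1| < (b (n+1) : ℤ) then Vfun p b m j ((k:ℤ)+1).natAbs else 0) = _
      have habs : |(k:ℤ)+1| = ((k+1:ℕ):ℤ) := by
        rw [abs_of_nonneg (by positivity)]; push_cast; ring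
      have hna : ((k:ℤ)+1).natAbs = k+1 := by omega
      rw [habs, hna]
      exact ite_cast_lt (k+1) (b (n+1)) 0 _
    have w2 : Wz ((k:ℤ)-1) = Wif (b (n+1)) (Vfun p b m j) (npred k) := by
      rw [hWz]
      show (if |(k:ℤ)-1| < (b (n+1) : ℤ) then Vfun p b m j ((k:ℤ)-1).natAbs else 0) = _
      have habs : |(k:ℤ)-1| = ((npred k : ℕ):ℤ) := by
        cases k with
        | zero => simp [npred]
        | succ k' =>
            rw [abs_of_nonneg (by push_cast; omega : (0:ℤ) ≤ (↑(k'+1) : ℤ) - 1)]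
            show ((k'+1 : ℕ):ℤ) - 1 = _
            push_cast [npred]; ring
      have hna : ((k:ℤ)-1).natAbs = npred k := by
        cases k with
        | zero => simp [npred]
        | succ k' =>
            show (((k'+1:ℕ):ℤ) - 1).natAbs = k'
            omega
      rw [habs, hna]
      exact ite_cast_lt (npred k) (b (n+1)) 0 _
    have w3 : Wz (-(k:ℤ)+1) = Wif (b (n+1)) (Vfun p b m j) (npred k) := by
      rw [show -(k:ℤ)+1 = -((k:ℤ)-1) by ring, Wzneg, w2]
    have w4 : Wz (-(k:ℤ)-1) = Wif (b (n+1)) (Vfun p b m j) (k+1) := by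
      rw [show -(k:ℤ)-1 = -((k:ℤ)+1) by ring, Wzneg, w1]
    have hV : Vfun p b m (j+1) k = phi p k * Wif (b (n+1)) (Vfun p b m j) (k+1)
        + (1 - phi p k) * Wif (b (n+1)) (Vfun p b m j) (npred k) := by
      rw [Vfun_succ, hmj]
    have L1 := pair_L1 b hp0 hp1 n k
    have L2 := pair_L2 b hp0 hp1 n k
    rw [f1, f2, w1, w2, w3, w4, hV]
    set A := Wif (b (n+1)) (Vfun p b m j) (k+1)
    set B := Wif (b (n+1)) (Vfun p b m j) (npred k)
    set h1 := hfun p b n ((k:ℤ))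
    set h2 := hfun p b n (-(k:ℤ))
    linear_combination A * L1 + B * L2
  set G : ℤ → ℝ := fun x => hfun p b n x * (p * Wz (x+1) + (1-p) * Wz (x-1))
    - hfun p b n x * Vfun p b m (j+1) x.natAbs with hG
  have pairAll : ∀ x : ℤ, G x + G (-x) = 0 := by
    intro x
    rcases Int.natAbs_eq x with h | h
    · rw [h]
      simp only [hG]
      exact pairK x.natAbs
    · rw [h]
      simp only [hG, neg_neg]
      linarith [pairK x.natAbs]
  have hzero : ∑ x ∈ Icc (-(m:ℤ)) m, G x = 0 := by
    have hneg := sum_Icc_neg (m:ℤ) G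
    have h2 : ∑ x ∈ Icc (-(m:ℤ)) m, G x + ∑ x ∈ Icc (-(m:ℤ)) m, G (-x)
        = ∑ x ∈ Icc (-(m:ℤ)) m, (G x + G (-x)) := (Finset.sum_add_distrib).symm
    have h3 : ∑ x ∈ Icc (-(m:ℤ)) m, (G x + G (-x)) = 0 :=
      Finset.sum_eq_zero fun x _ => pairAll x
    linarith
  have hsub : ∑ x ∈ Icc (-(m:ℤ)) m, G x
      = ∑ x ∈ Icc (-(m:ℤ)) m, hfun p b n x * (p * Wz (x+1) + (1-p) * Wz (x-1))
        - ∑ x ∈ Icc (-(m:ℤ)) m, hfun p b n x * Vfun p b m (j+1) x.natAbs := by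
    rw [hG, Finset.sum_sub_distrib]
  linarith

lemma bridge (hp0 : 0 ≤ p) (hp1 : p ≤ 1) : ∀ n j, m = n + j →
    ∑ x ∈ Icc (-(m:ℤ)) m, hfun p b n x * Vfun p b m j x.natAbs = Vfun p b m m 0 := by
  intro n
  induction n with
  | zero =>
      intro j hj
      have hjm : j = m := by omega
      subst hjm
      rw [Finset.sum_eq_single 0]
      · show hfun p b 0 0 * _ = _
        unfold hfun
        norm_num
      · intro x hx hx0
        have : hfun p b 0 x = 0 := by unfold hfun; rw [if_neg hx0]
        rw [this, zero_mul]
      · intro h0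
        exfalso; apply h0
        simp only [Finset.mem_Icc]
        constructor <;> [linarith [Int.ofNat_nonneg j]; exact Int.ofNat_nonneg j]
  | succ n ih =>
      intro j hj
      rw [keystep b m hp0 hp1 n j (by omega)]
      exact ih (j+1) (by omega)

lemma total_eq (hp0 : 0 ≤ p) (hp1 : p ≤ 1) :
    ∑ x ∈ Icc (-(m:ℤ)) m, hfun p b m x = Vfun p b m m 0 := by
  rw [← bridge b m hp0 hp1 m 0 (by omega)]
  exact Finset.sum_congr rfl fun x _ => by
    show hfun p b m x = hfun p b m x * Vfun p b m 0 x.natAbs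
    show hfun p b m x = hfun p b m x * 1
    rw [mul_one]

end keystep

/-- Main comparison of totals. -/
lemma total_le (b : ℕ → ℕ) (m : ℕ) {p' p'' : ℝ}
    (hp'0 : 0 ≤ p') (hp'1 : p' ≤ 1) (hp''0 : 0 ≤ p'') (hp''1 : p'' ≤ 1)
    (hq : p' * (1-p') ≤ p'' * (1-p'')) :
    ∑ x ∈ Icc (-(m:ℤ)) m, hfun p' b m x ≤ ∑ x ∈ Icc (-(m:ℤ)) m, hfun p'' b m x := by
  rw [total_eq b m hp'0 hp'1, total_eq b m hp''0 hp''1]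
  exact Vfun_cross b m hp'0 hp'1 hp''0 hp''1 hq m 0

section meas

variable {Ω : Type*} [MeasurableSpace Ω] (μ : Measure Ω) [IsProbabilityMeasure μ]
  (p : ℝ) (X : ℕ → Ω → ℝ) (b : ℕ → ℕ)

/-- The event that the walk stays strictly inside the boundaries up to time `n`
and ends at `x`. -/
def Ev (n : ℕ) (x : ℤ) : Set Ω :=
  {ω | (∀ k, 1 ≤ k → k ≤ n → |∑ i ∈ Finset.range k, X i ω| < (b k : ℝ))
    ∧ (∑ i ∈ Finset.range n, X i ω) = (x:ℝ)}

variable {X}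

lemma Ev_measurable (hX : ∀ i, Measurable (X i)) (n : ℕ) (x : ℤ) :
    MeasurableSet (Ev X b n x) := by
  have hS : ∀ k : ℕ, Measurable fun ω => ∑ i ∈ Finset.range k, X i ω :=
    fun k => Finset.measurable_sum _ fun i _ => hX i
  have : Ev X b n x = (⋂ k ∈ Set.Icc 1 n,
      {ω | |∑ i ∈ Finset.range k, X i ω| < (b k : ℝ)})
      ∩ {ω | (∑ i ∈ Finset.range n, X i ω) = (x:ℝ)} := by
    ext ω
    simp only [Ev, Set.mem_setOf_eq, Set.mem_inter_iff, Set.mem_iInter, Set.mem_Icc]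
    tauto
  rw [this]
  refine MeasurableSet.inter ?_ ?_
  · refine MeasurableSet.biInter (Set.to_countable _) fun k _ => ?_
    exact measurableSet_lt (hS k).abs measurable_const
  · exact (hS n) (measurableSet_singleton _)

lemma indep_step (hX : ∀ i, Measurable (X i))
    (hind : iIndepFun X μ) (n : ℕ) (y : ℤ)
    (B : Set ℝ) (hB : MeasurableSet B) :
    μ (Ev X b n y ∩ X n ⁻¹' B) = μ (Ev X b n y) * μ (X n ⁻¹' B) := by
  classical
  set Φ : Ω → (↥(Finset.range n) → ℝ) := fun ω i => X i ω with hΦ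
  set A : Set (↥(Finset.range n) → ℝ) :=
    {v | (∀ k, 1 ≤ k → k ≤ n → |∑ i ∈ (Finset.range n).attach,
        (if (i:ℕ) < k then v i else 0)| < (b k : ℝ))
      ∧ (∑ i ∈ (Finset.range n).attach, v i) = (y:ℝ)} with hA
  have hsum : ∀ (ω : Ω) (k : ℕ), k ≤ n →
      ∑ i ∈ (Finset.range n).attach, (if (i:ℕ) < k then X i ω else 0)
        = ∑ i ∈ Finset.range k, X i ω := by
    intro ω k hk
    rw [Finset.sum_attach (Finset.range n) (fun i => if i < k then X i ω else 0),
      ← Finset.sum_filter]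
    congr 1
    ext i
    simp only [Finset.mem_filter, Finset.mem_range]
    omega
  have hpre : Ev X b n y = Φ ⁻¹' A := by
    ext ω
    simp only [Ev, Set.mem_setOf_eq, Set.mem_preimage, hA, hΦ]
    constructor
    · rintro ⟨h1, h2⟩
      refine ⟨fun k hk1 hk2 => ?_, ?_⟩
      · rw [hsum ω k hk2]; exact h1 k hk1 hk2
      · rw [Finset.sum_attach (Finset.range n) (fun i => X i ω)]; exact h2
    · rintro ⟨h1, h2⟩
      refine ⟨fun k hk1 hk2 => ?_, ?_⟩
      · have := h1 k hk1 hk2; rwa [hsum ω k hk2] at this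
      · rwa [Finset.sum_attach (Finset.range n) (fun i => X i ω)] at h2
  have hAmeas : MeasurableSet A := by
    have hS : ∀ k : ℕ, Measurable fun v : (↥(Finset.range n) → ℝ) =>
        ∑ i ∈ (Finset.range n).attach, (if (i:ℕ) < k then v i else 0) := by
      intro k
      refine Finset.measurable_sum _ fun i _ => ?_
      by_cases h : (i:ℕ) < k
      · simpa [h] using measurable_pi_apply i
      · simpa [h] using measurable_const
    have hT : Measurable fun v : (↥(Finset.range n) → ℝ) =>
        ∑ i ∈ (Finset.range n).attach, v i :=
      Finset.measurable_sum _ fun i _ => measurable_pi_apply i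
    have : A = (⋂ k ∈ Set.Icc 1 n, {v : (↥(Finset.range n) → ℝ) |
        |∑ i ∈ (Finset.range n).attach, (if (i:ℕ) < k then v i else 0)| < (b k : ℝ)})
        ∩ {v | (∑ i ∈ (Finset.range n).attach, v i) = (y:ℝ)} := by
      ext v
      simp only [hA, Set.mem_setOf_eq, Set.mem_inter_iff, Set.mem_iInter, Set.mem_Icc]
      tauto
    rw [this]
    refine MeasurableSet.inter ?_ ?_
    · refine MeasurableSet.biInter (Set.to_countable _) fun k _ => ?_
      exact measurableSet_lt (hS k).abs measurable_const
    · exact hT (measurableSet_singleton _)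
  have hIF : IndepFun Φ (X n) μ := by
    have h1 := hind.indepFun_finset (Finset.range n) {n}
      (by simp) hX
    have h2 : Measurable (fun v : (({n} : Finset ℕ) → ℝ) =>
        v ⟨n, Finset.mem_singleton_self n⟩) := measurable_pi_apply _
    exact h1.comp measurable_id h2
  rw [hpre]
  exact hIF.measure_inter_preimage_eq_mul A B hAmeas hB

variable {p}

lemma map_one (hp0 : 0 ≤ p) (hp1 : p ≤ 1) (n : ℕ) (hXn : Measurable (X n))
    (hdist : Measure.map (X n) μ = stepDist p) :
    μ (X n ⁻¹' {1}) = ENNReal.ofReal p := by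
  rw [← Measure.map_apply hXn (measurableSet_singleton _), hdist, stepDist]
  rw [Measure.add_apply, Measure.smul_apply, Measure.smul_apply,
    Measure.dirac_apply' _ (measurableSet_singleton _),
    Measure.dirac_apply' _ (measurableSet_singleton _)]
  have h1 : (1:ℝ) ∈ ({1} : Set ℝ) := rfl
  have h2 : (-1:ℝ) ∉ ({1} : Set ℝ) := by norm_num
  rw [Set.indicator_of_mem h1, Set.indicator_of_notMem h2]
  simp

lemma map_negone (hp0 : 0 ≤ p) (hp1 : p ≤ 1) (n : ℕ) (hXn : Measurable (X n))
    (hdist : Measure.map (X n) μ = stepDist p) :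
    μ (X n ⁻¹' {-1}) = ENNReal.ofReal (1-p) := by
  rw [← Measure.map_apply hXn (measurableSet_singleton _), hdist, stepDist]
  rw [Measure.add_apply, Measure.smul_apply, Measure.smul_apply,
    Measure.dirac_apply' _ (measurableSet_singleton _),
    Measure.dirac_apply' _ (measurableSet_singleton _)]
  have h1 : (1:ℝ) ∉ ({-1} : Set ℝ) := by norm_num
  have h2 : (-1:ℝ) ∈ ({-1} : Set ℝ) := rfl
  rw [Set.indicator_of_notMem h1, Set.indicator_of_mem h2]
  simp

lemma map_null (hp0 : 0 ≤ p) (hp1 : p ≤ 1) (n : ℕ) (hXn : Measurable (X n))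
    (hdist : Measure.map (X n) μ = stepDist p) :
    μ (X n ⁻¹' ({1,-1} : Set ℝ)ᶜ) = 0 := by
  have hms : MeasurableSet (({1,-1} : Set ℝ)ᶜ) :=
    (MeasurableSet.insert (measurableSet_singleton _) 1).compl
  rw [← Measure.map_apply hXn hms, hdist, stepDist]
  rw [Measure.add_apply, Measure.smul_apply, Measure.smul_apply,
    Measure.dirac_apply' _ hms, Measure.dirac_apply' _ hms]
  have h1 : (1:ℝ) ∉ (({1,-1} : Set ℝ)ᶜ) := by norm_num
  have h2 : (-1:ℝ) ∉ (({1,-1} : Set ℝ)ᶜ) := by norm_num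
  rw [Set.indicator_of_notMem h1, Set.indicator_of_notMem h2]
  simp

lemma Ev_measure (hp0 : 0 ≤ p) (hp1 : p ≤ 1) (hX : ∀ i, Measurable (X i))
    (hind : iIndepFun X μ)
    (hdist : ∀ i, Measure.map (X i) μ = stepDist p) :
    ∀ n x, μ (Ev X b n x) = ENNReal.ofReal (hfun p b n x) := by
  intro n
  induction n with
  | zero =>
      intro x
      by_cases hx : x = 0
      · subst hx
        have : Ev X b 0 (0:ℤ) = Set.univ := by
          ext ω
          simp only [Ev, Set.mem_setOf_eq, Set.mem_univ, iff_true]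
          refine ⟨fun k hk1 hk2 => by omega, by simp⟩
        rw [this]
        simp [hfun]
      · have : Ev X b 0 x = ∅ := by
          ext ω
          simp only [Ev, Set.mem_setOf_eq, Set.mem_empty_iff_false, iff_false, not_and]
          intro _
          simp only [Finset.range_zero, Finset.sum_empty]
          intro h
          exact hx (by exact_mod_cast h.symm)
        rw [this]
        simp [hfun, hx]
  | succ n ih =>
      intro x
      by_cases hc : |x| < (b (n+1) : ℤ)
      · have hcR : |(x:ℝ)| < (b (n+1) : ℝ) := by
          rw [← Int.cast_abs]
          exact_mod_cast hc
        have hseq1 : Ev X b (n+1) x ∩ X n ⁻¹' {1} = Ev X b n (x-1) ∩ X n ⁻¹' {1} := by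
          ext ω
          simp only [Ev, Set.mem_inter_iff, Set.mem_setOf_eq, Set.mem_preimage,
            Set.mem_singleton_iff]
          constructor
          · rintro ⟨⟨h1, h2⟩, h3⟩
            rw [Finset.sum_range_succ, h3] at h2
            refine ⟨⟨fun k hk1 hk2 => h1 k hk1 (by omega), ?_⟩, h3⟩
            push_cast
            linarith
          · rintro ⟨⟨h1, h2⟩, h3⟩
            have hS : (∑ i ∈ Finset.range (n+1), X i ω) = (x:ℝ) := by
              rw [Finset.sum_range_succ, h3, h2]
              push_cast
              ring
            refine ⟨⟨fun k hk1 hk2 => ?_, hS⟩, h3⟩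
            by_cases hkn : k ≤ n
            · exact h1 k hk1 hkn
            · have : k = n+1 := by omega
              subst this
              rw [hS]
              exact hcR
        have hseq2 : Ev X b (n+1) x ∩ X n ⁻¹' {-1} = Ev X b n (x+1) ∩ X n ⁻¹' {-1} := by
          ext ω
          simp only [Ev, Set.mem_inter_iff, Set.mem_setOf_eq, Set.mem_preimage,
            Set.mem_singleton_iff]
          constructor
          · rintro ⟨⟨h1, h2⟩, h3⟩
            rw [Finset.sum_range_succ, h3] at h2
            refine ⟨⟨fun k hk1 hk2 => h1 k hk1 (by omega), ?_⟩, h3⟩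
            push_cast
            linarith
          · rintro ⟨⟨h1, h2⟩, h3⟩
            have hS : (∑ i ∈ Finset.range (n+1), X i ω) = (x:ℝ) := by
              rw [Finset.sum_range_succ, h3, h2]
              push_cast
              ring
            refine ⟨⟨fun k hk1 hk2 => ?_, hS⟩, h3⟩
            by_cases hkn : k ≤ n
            · exact h1 k hk1 hkn
            · have : k = n+1 := by omega
              subst this
              rw [hS]
              exact hcR
        have hsplit : μ (Ev X b (n+1) x)
            = μ (Ev X b (n+1) x ∩ X n ⁻¹' {1}) + μ (Ev X b (n+1) x ∩ X n ⁻¹' {-1}) := by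
          have h0 := map_null μ hp0 hp1 n (hX n) (hdist n)
          have hpre : X n ⁻¹' ({1,-1} : Set ℝ) = X n ⁻¹' {1} ∪ X n ⁻¹' {-1} := by
            rw [← Set.preimage_union]
            congr 1
          have e1 : μ (Ev X b (n+1) x) = μ (Ev X b (n+1) x ∩ X n ⁻¹' ({1,-1} : Set ℝ)) := by
            rw [measure_inter_conull]
            rw [← Set.preimage_compl]
            exact h0
          rw [e1, hpre, Set.inter_union_distrib_left]
          apply measure_union
          · rw [Set.disjoint_left]
            rintro ω ⟨-, h1⟩ ⟨-, h2⟩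
            simp only [Set.mem_preimage, Set.mem_singleton_iff] at h1 h2
            rw [h1] at h2
            norm_num at h2
          · exact (Ev_measurable b hX (n+1) x).inter ((hX n) (measurableSet_singleton _))
        rw [hsplit, hseq1, hseq2, indep_step μ b hX hind n (x-1) _ (measurableSet_singleton _),
          indep_step μ b hX hind n (x+1) _ (measurableSet_singleton _),
          ih (x-1), ih (x+1), map_one μ hp0 hp1 n (hX n) (hdist n),
          map_negone μ hp0 hp1 n (hX n) (hdist n)]
        have hh1 := hfun_nonneg (p := p) b hp0 hp1 n (x-1)
        have hh2 := hfun_nonneg (p := p) b hp0 hp1 n (x+1)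
        rw [← ENNReal.ofReal_mul hh1, ← ENNReal.ofReal_mul hh2, ← ENNReal.ofReal_add
          (mul_nonneg hh1 hp0) (mul_nonneg hh2 (by linarith))]
        have : hfun p b (n+1) x = p * hfun p b n (x-1) + (1-p) * hfun p b n (x+1) := by
          show (if |x| < (b (n+1) : ℤ) then
            p * hfun p b n (x-1) + (1-p) * hfun p b n (x+1) else 0) = _
          rw [if_pos hc]
        rw [this]
        congr 1
        ring
      · have hempty : Ev X b (n+1) x = ∅ := by
          ext ω
          simp only [Ev, Set.mem_setOf_eq, Set.mem_empty_iff_false, iff_false, not_and]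
          intro h1 h2
          have := h1 (n+1) (by omega) le_rfl
          rw [h2] at this
          apply hc
          rw [← Int.cast_abs] at this
          exact_mod_cast this
        rw [hempty]
        have : hfun p b (n+1) x = 0 := by
          show (if |x| < (b (n+1) : ℤ) then
            p * hfun p b n (x-1) + (1-p) * hfun p b n (x+1) else 0) = _
          rw [if_neg hc]
        rw [this]
        simp

lemma int_sum (ω : Ω) : ∀ n : ℕ, (∀ i, i < n → X i ω = 1 ∨ X i ω = -1) →
    ∃ x : ℤ, (∑ i ∈ Finset.range n, X i ω) = (x:ℝ) ∧ -(n:ℤ) ≤ x ∧ x ≤ n := by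
  intro n
  induction n with
  | zero => intro _; exact ⟨0, by simp, by simp, by simp⟩
  | succ n ih =>
      intro h
      obtain ⟨x, hx, hx1, hx2⟩ := ih (fun i hi => h i (by omega))
      rcases h n (by omega) with h1 | h1
      · refine ⟨x+1, ?_, by push_cast; omega, by push_cast; omega⟩
        rw [Finset.sum_range_succ, hx, h1]
        push_cast
        ring
      · refine ⟨x-1, ?_, by push_cast; omega, by push_cast; omega⟩
        rw [Finset.sum_range_succ, hx, h1]
        push_cast
        ring

lemma event_measure (m : ℕ) (hp0 : 0 ≤ p) (hp1 : p ≤ 1) (hX : ∀ i, Measurable (X i))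
    (hind : iIndepFun X μ)
    (hdist : ∀ i, Measure.map (X i) μ = stepDist p) :
    μ {ω | ∀ n, 1 ≤ n → n ≤ m → |∑ i ∈ Finset.range n, X i ω| < (b n : ℝ)}
      = ENNReal.ofReal (∑ x ∈ Icc (-(m:ℤ)) m, hfun p b m x) := by
  set E := {ω | ∀ n, 1 ≤ n → n ≤ m → |∑ i ∈ Finset.range n, X i ω| < (b n : ℝ)} with hE
  set U := ⋃ x ∈ Finset.Icc (-(m:ℤ)) m, Ev X b m x with hU
  set N := ⋃ i ∈ Finset.range m, X i ⁻¹' (({1,-1} : Set ℝ)ᶜ) with hN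
  have hNnull : μ N = 0 := by
    rw [hN]
    refine (measure_biUnion_null_iff (Finset.range m).countable_toSet).2 fun i _ => ?_
    exact map_null μ hp0 hp1 i (hX i) (hdist i)
  have hUE : U ⊆ E := by
    rw [hU, hE]
    intro ω hω
    simp only [Set.mem_iUnion] at hω
    obtain ⟨x, -, hx⟩ := hω
    exact hx.1
  have hEUN : E ⊆ U ∪ N := by
    intro ω hω
    by_cases hωN : ω ∈ N
    · exact Or.inr hωN
    · left
      have hpm : ∀ i, i < m → X i ω = 1 ∨ X i ω = -1 := by
        intro i hi
        by_contra hcon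
        push_neg at hcon
        apply hωN
        rw [hN]
        simp only [Set.mem_iUnion]
        exact ⟨i, Finset.mem_range.2 hi, by
          simp only [Set.mem_preimage, Set.mem_compl_iff, Set.mem_insert_iff,
            Set.mem_singleton_iff]
          tauto⟩
      obtain ⟨x, hx, hx1, hx2⟩ := int_sum ω m hpm
      rw [hU]
      simp only [Set.mem_iUnion]
      exact ⟨x, Finset.mem_Icc.2 ⟨hx1, hx2⟩, ⟨hω, hx⟩⟩
  have hmeasU : μ E = μ U := by
    apply le_antisymm
    · calc μ E ≤ μ (U ∪ N) := measure_mono hEUN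
        _ ≤ μ U + μ N := measure_union_le _ _
        _ = μ U := by rw [hNnull, add_zero]
    · exact measure_mono hUE
  rw [hmeasU, hU]
  have hdisj : (↑(Finset.Icc (-(m:ℤ)) m) : Set ℤ).PairwiseDisjoint (Ev X b m) := by
    intro x _ y _ hxy
    rw [Function.onFun, Set.disjoint_left]
    rintro ω ⟨-, h1⟩ ⟨-, h2⟩
    rw [h1] at h2
    exact hxy (by exact_mod_cast h2)
  rw [measure_biUnion_finset hdisj (fun x _ => Ev_measurable b hX m x)]
  rw [Finset.sum_congr rfl (fun x _ => Ev_measure μ b hp0 hp1 hX hind hdist m x)]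
  exact (ENNReal.ofReal_sum_of_nonneg (fun x _ => hfun_nonneg (p := p) b hp0 hp1 m x)).symm

end meas

end BWalk

/-- **Corollary 1.** For non-negative integer boundaries `b_n`, the stopping time
`T^p = inf{n ≥ 1 : |S^p_n| ≥ b_n}` of the Bernoulli random walk is stochastically
increasing in `p ∈ [0,1/2]` and decreasing in `p ∈ [1/2,1]`: if `|p' - 1/2| > |p'' - 1/2|`,
then `P(T^{p'} > m) ≤ P(T^{p''} > m)` for every `m ≥ 1`, where
`{T^p > m} = {|S^p_n| < b_n for all 1 ≤ n ≤ m}`. -/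
theorem bernoulli_walk_stopping_time_stochastically_monotone
    {Ω' Ω'' : Type*} [MeasurableSpace Ω'] [MeasurableSpace Ω'']
    (μ' : Measure Ω') (μ'' : Measure Ω'')
    [IsProbabilityMeasure μ'] [IsProbabilityMeasure μ'']
    (p' p'' : ℝ) (hp' : p' ∈ Set.Icc (0 : ℝ) 1) (hp'' : p'' ∈ Set.Icc (0 : ℝ) 1)
    (hpp : |p' - 1/2| > |p'' - 1/2|)
    (X' : ℕ → Ω' → ℝ) (X'' : ℕ → Ω'' → ℝ)
    (hX'meas : ∀ i, Measurable (X' i)) (hX''meas : ∀ i, Measurable (X'' i))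
    (hX'indep : iIndepFun X' μ')
    (hX''indep : iIndepFun X'' μ'')
    (hX'dist : ∀ i, Measure.map (X' i) μ' = stepDist p')
    (hX''dist : ∀ i, Measure.map (X'' i) μ'' = stepDist p'')
    (b : ℕ → ℕ) (m : ℕ) (hm : 1 ≤ m) :
    μ' {ω | ∀ n, 1 ≤ n → n ≤ m → |∑ i ∈ Finset.range n, X' i ω| < (b n : ℝ)}
      ≤ μ'' {ω | ∀ n, 1 ≤ n → n ≤ m → |∑ i ∈ Finset.range n, X'' i ω| < (b n : ℝ)} := by
  obtain ⟨hp'0, hp'1⟩ := hp'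
  obtain ⟨hp''0, hp''1⟩ := hp''
  have hq : p' * (1-p') ≤ p'' * (1-p'') := by
    have h := mul_self_lt_mul_self (abs_nonneg (p'' - 1/2)) hpp
    rw [abs_mul_abs_self, abs_mul_abs_self] at h
    nlinarith
  rw [BWalk.event_measure μ' b m hp'0 hp'1 hX'meas hX'indep hX'dist,
      BWalk.event_measure μ'' b m hp''0 hp''1 hX''meas hX''indep hX''dist]
  exact ENNReal.ofReal_le_ofReal (BWalk.total_le b m hp'0 hp'1 hp''0 hp''1 hq)
end

section
/- For non-negative integers b_n (n ≥ 1), the stopping time T̂^p = inf{n ≥ 1 : |U_n^p| ≥ b_n} is stochastically maximized over p ∈ [0,1] by p = 1/2; that is, for every p ∈ [0,1] and every m ≥ 1, P(T̂^{p} > m) ≤ P(T̂^{1/2} > m). -/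
open MeasureTheory ProbabilityTheory Finset

namespace WalkAux


noncomputable def walk (p : ℝ) (b : ℕ → ℕ) : ℕ → ℤ → ℝ
  | 0 => fun x => if x = 1 ∨ x = -1 then (1:ℝ)/2 else 0
  | (n+1) => fun x => if |x| < (b (n+1) : ℤ) then
      p * walk p b n (x - 1) + (1 - p) * walk p b n (x + 1) else 0

lemma walk_nonneg {p : ℝ} (hp0 : 0 ≤ p) (hp1 : p ≤ 1) (b : ℕ → ℕ) :
    ∀ n x, 0 ≤ walk p b n x := by
  intro n
  induction n with
  | zero => intro x; simp only [walk]; positivity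
  | succ n ih =>
    intro x
    simp only [walk]
    split
    · have := ih (x-1); have := ih (x+1); nlinarith
    · exact le_refl _

lemma walk_parity {p : ℝ} (b : ℕ → ℕ) :
    ∀ (n : ℕ) (x : ℤ), (x + (n:ℤ)) % 2 = 0 → walk p b n x = 0 := by
  intro n
  induction n with
  | zero =>
    intro x hx
    simp only [Nat.cast_zero, add_zero] at hx
    simp only [walk]; rw [if_neg]; omega
  | succ n ih =>
    intro x hx
    push_cast at hx
    simp only [walk]
    rw [ih (x-1) (by push_cast; omega), ih (x+1) (by push_cast; omega)]
    split <;> ring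

lemma walk_flip (p : ℝ) (b : ℕ → ℕ) :
    ∀ n x, walk (1-p) b n x = walk p b n (-x) := by
  intro n
  induction n with
  | zero => intro x; simp only [walk]; congr 1; simp only [eq_iff_iff]; omega
  | succ n ih =>
    intro x
    simp only [walk, abs_neg]
    rw [ih (x-1), ih (x+1), show (1 - (1-p)) = p by ring,
      show -(x-1) = -x + 1 by ring, show -(x+1) = -x - 1 by ring]
    split <;> ring

/-- Invariants (A) skewness and (L) left monotonicity, for `p ≥ 1/2`. -/
lemma walk_AL {p : ℝ} (hp : 1/2 ≤ p) (hp1 : p ≤ 1) (b : ℕ → ℕ) :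
    ∀ n, (∀ j : ℤ, 0 ≤ j → walk p b n (-j) ≤ walk p b n j) ∧
         (∀ j : ℤ, 0 ≤ j → walk p b n (-j-2) ≤ walk p b n (-j)) := by
  intro n
  induction n with
  | zero =>
    constructor
    · intro j hj
      simp only [walk]
      rcases eq_or_ne j 1 with rfl | hj1
      · norm_num
      · rw [if_neg (by omega)]
        split <;> norm_num
    · intro j hj
      simp only [walk]
      rw [if_neg (by omega)]
      split <;> norm_num
  | succ n ih =>
    obtain ⟨hA, hL⟩ := ih
    have hnn := walk_nonneg (by linarith) hp1 b n
    constructor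
    · intro j hj
      simp only [walk, abs_neg]
      split
      · rcases eq_or_lt_of_le hj with rfl | hj1
        · norm_num
        · have h1 : walk p b n (-j-1) ≤ walk p b n (-j+1) := by
            have := hL (j-1) (by omega)
            convert this using 2 <;> ring
          have h2 : walk p b n (-j+1) ≤ walk p b n (j-1) := by
            have := hA (j-1) (by omega)
            convert this using 2 <;> ring
          have h3 : walk p b n (-j-1) ≤ walk p b n (j+1) := by
            have := hA (j+1) (by omega)
            convert this using 2 <;> ring
          set A := walk p b n (-j-1) with hA1
          set C := walk p b n (-j+1) with hC1
          set D := walk p b n (j-1) with hD1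
          set E := walk p b n (j+1) with hE1
          have t0 : p * C ≤ p * D := by nlinarith
          rcases le_or_gt C E with h | h
          · have t1 : p * A ≤ p * D := by nlinarith
            have t2 : (1-p) * C ≤ (1-p) * E := by nlinarith
            linarith
          · have t1 : (1-p)*(C-E) ≤ (1-p)*(C-A) := by nlinarith
            have t2 : (1-p)*(C-A) ≤ p*(C-A) := by nlinarith
            nlinarith
      · exact le_refl _
    · intro j hj
      simp only [walk]
      rcases le_or_gt ((b (n+1) : ℤ)) (j+2) with hb | hb
      · rw [if_neg (by rw [abs_lt]; omega)]
        split
        · have := hnn (-j-1); have := hnn (-j+1); nlinarith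
        · exact le_refl _
      · rw [if_pos (by rw [abs_lt]; omega), if_pos (by rw [abs_lt]; omega)]
        have h1 : walk p b n (-j-2-1) ≤ walk p b n (-j-1) := by
          have := hL (j+1) (by omega)
          convert this using 2 <;> ring
        have h2 : walk p b n (-j-2+1) ≤ walk p b n (-j+1) := by
          rcases eq_or_lt_of_le hj with rfl | hj1
          · have := hA 1 (by norm_num)
            convert this using 2 <;> norm_num
          · have := hL (j-1) (by omega)
            convert this using 2 <;> ring
        have t1 : p * walk p b n (-j-2-1) ≤ p * walk p b n (-j-1) := by nlinarith
        have t2 : (1-p) * walk p b n (-j-2+1) ≤ (1-p) * walk p b n (-j+1) := by nlinarith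
        linarith


lemma sum_Icc_shift (f : ℤ → ℝ) (a c d : ℤ) :
    ∑ x ∈ Icc (a+d) (c+d), f x = ∑ x ∈ Icc a c, f (x + d) := by
  rw [← Finset.map_add_right_Icc, Finset.sum_map]
  simp [addRightEmbedding]

lemma sum_Icc_top (f : ℤ → ℝ) {a c : ℤ} (h : a ≤ c + 1) :
    ∑ x ∈ Icc a (c+1), f x = (∑ x ∈ Icc a c, f x) + f (c+1) := by
  rw [show Icc a (c+1) = insert (c+1) (Icc a c) by ext x; simp; omega,
    Finset.sum_insert (by simp)]
  ring

lemma sum_Icc_bot (f : ℤ → ℝ) {a c : ℤ} (h : a ≤ c) :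
    ∑ x ∈ Icc a c, f x = f a + ∑ x ∈ Icc (a+1) c, f x := by
  rw [show Icc a c = insert a (Icc (a+1) c) by ext x; simp; omega,
    Finset.sum_insert (by simp)]

lemma sum_top2 (f : ℤ → ℝ) {a j : ℤ} (h : a ≤ j) :
    ∑ x ∈ Icc a (j+1), f x = (∑ x ∈ Icc a (j-1), f x) + f j + f (j+1) := by
  rw [sum_Icc_top f (by omega), show j = (j-1)+1 by ring, sum_Icc_top f (by omega)]
  ring_nf

lemma sum_step (p : ℝ) (f : ℤ → ℝ) (a c : ℤ) :
    ∑ x ∈ Icc a c, (p * f (x - 1) + (1 - p) * f (x + 1))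
      = p * (∑ x ∈ Icc (a-1) (c-1), f x) + (1 - p) * (∑ x ∈ Icc (a+1) (c+1), f x) := by
  rw [Finset.sum_add_distrib, ← Finset.mul_sum, ← Finset.mul_sum,
    show a - 1 = a + (-1) by ring, show c - 1 = c + (-1) by ring,
    sum_Icc_shift f a c (-1), sum_Icc_shift f a c 1]
  simp only [← sub_eq_add_neg]

lemma sum_trunc (g : ℤ → ℝ) {j B : ℤ} (hj : 0 ≤ j) (hB : 0 ≤ B) :
    ∑ x ∈ Icc (-j) j, (if |x| < B then g x else 0)
      = ∑ x ∈ Icc (-(min j (B-1))) (min j (B-1)), g x := by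
  rw [← Finset.sum_filter]
  congr 1
  ext x
  simp only [Finset.mem_filter, Finset.mem_Icc, abs_lt]
  omega

lemma walk_csum_le {p : ℝ} (hp : 1/2 ≤ p) (hp1 : p ≤ 1) (b : ℕ → ℕ) :
    ∀ (n : ℕ) (j : ℤ), ∑ x ∈ Icc (-j) j, walk p b n x ≤ ∑ x ∈ Icc (-j) j, walk (1/2) b n x := by
  intro n
  induction n with
  | zero => intro j; simp [walk]
  | succ n ih =>
    intro j
    rcases lt_or_ge j 0 with hj | hj
    · rw [Finset.Icc_eq_empty (by omega)]; simp
    have hB : (0:ℤ) ≤ (b (n+1) : ℤ) := by positivity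
    have key : ∀ q : ℝ, ∑ x ∈ Icc (-j) j, walk q b (n+1) x
        = q * (∑ x ∈ Icc (-(min j ((b (n+1):ℤ)-1))-1) ((min j ((b (n+1):ℤ)-1))-1), walk q b n x)
        + (1-q) * (∑ x ∈ Icc (-(min j ((b (n+1):ℤ)-1))+1) ((min j ((b (n+1):ℤ)-1))+1), walk q b n x) := by
      intro q
      have hw : ∀ x, walk q b (n+1) x = if |x| < (b (n+1) : ℤ) then
          q * walk q b n (x - 1) + (1 - q) * walk q b n (x + 1) else 0 := fun x => by
        simp only [walk]
      rw [Finset.sum_congr rfl (fun x _ => hw x), sum_trunc _ hj hB, sum_step]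
    rw [key p, key (1/2)]
    set j' : ℤ := min j ((b (n+1):ℤ)-1) with hj'
    rcases lt_or_ge j' 0 with hj0 | hj0
    · have e1 : Icc (-j'-1) (j'-1) = (∅ : Finset ℤ) := Finset.Icc_eq_empty (by omega)
      have e2 : Icc (-j'+1) (j'+1) = (∅ : Finset ℤ) := Finset.Icc_eq_empty (by omega)
      rw [e1, e2]; simp
    -- j' ≥ 0 case
    have hnn := walk_nonneg (by linarith) hp1 b n
    have hA := (walk_AL hp hp1 b n).1
    set v := walk p b n with hv
    set w := walk (1/2) b n with hw2
    set Av := ∑ x ∈ Icc (-j'-1) (j'-1), v x with hAv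
    set Bv := ∑ x ∈ Icc (-j'+1) (j'+1), v x with hBv
    set Aw := ∑ x ∈ Icc (-j'-1) (j'-1), w x with hAw
    set Bw := ∑ x ∈ Icc (-j'+1) (j'+1), w x with hBw
    have hS1 : ∀ u : ℤ → ℝ, (∑ x ∈ Icc (-j'-1) (j'+1), u x)
        = (∑ x ∈ Icc (-j'-1) (j'-1), u x) + u j' + u (j'+1) := fun u => sum_top2 u (by omega)
    have hS2 : ∀ u : ℤ → ℝ, (∑ x ∈ Icc (-j'-1) (j'+1), u x)
        = u (-j'-1) + (u (-j') + (∑ x ∈ Icc (-j'+1) (j'+1), u x)) := fun u => by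
      rw [sum_Icc_bot u (by omega : -j'-1 ≤ j'+1)]
      rw [show -j'-1+1 = -j' by ring, sum_Icc_bot u (by omega : -j' ≤ j'+1),
        show -j'+1 = -j'+1 by ring]
    have hd1 : Av - Bv = (v (-j'-1) + v (-j')) - (v j' + v (j'+1)) := by
      have h1 := hS1 v; have h2 := hS2 v
      linarith
    have hABv : Av - Bv ≤ 0 := by
      have h1 : v (-j') ≤ v j' := hA j' hj0
      have h2 : v (-j'-1) ≤ v (j'+1) := by
        have := hA (j'+1) (by omega); convert this using 2; ring
      linarith
    have step1 : p * Av + (1-p) * Bv ≤ (1/2) * Av + (1/2) * Bv := by nlinarith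
    have step2 : Av + Bv ≤ Aw + Bw := by
      rcases eq_or_lt_of_le hj0 with hj1 | hj1
      · -- j' = 0
        have hAv0 : Av = v (-1) := by
          rw [hAv, ← hj1]; norm_num
        have hBv0 : Bv = v 1 := by rw [hBv, ← hj1]; norm_num
        have hAw0 : Aw = w (-1) := by rw [hAw, ← hj1]; norm_num
        have hBw0 : Bw = w 1 := by rw [hBw, ← hj1]; norm_num
        rcases Int.emod_emod_of_dvd 0 (dvd_refl 2) with _
        by_cases hpar : ((1:ℤ) + (n:ℤ)) % 2 = 0
        · have z1 : v 1 = 0 := walk_parity b n 1 hpar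
          have z2 : v (-1) = 0 := walk_parity b n (-1) (by omega)
          have z3 : w 1 = 0 := walk_parity b n 1 hpar
          have z4 : w (-1) = 0 := walk_parity b n (-1) (by omega)
          rw [hAv0, hBv0, hAw0, hBw0, z1, z2, z3, z4]
        · have z0v : v 0 = 0 := walk_parity b n 0 (by omega)
          have z0w : w 0 = 0 := walk_parity b n 0 (by omega)
          have hsum : ∀ u : ℤ → ℝ, ∑ x ∈ Icc (-1:ℤ) 1, u x = u (-1) + u 0 + u 1 := by
            intro u
            rw [show (1:ℤ) = 0 + 1 by ring, sum_top2 u (by omega)]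
            norm_num
          have := ih 1
          rw [hsum v, hsum w] at this
          rw [hAv0, hBv0, hAw0, hBw0]
          rw [z0v, z0w] at this
          linarith
      · -- j' ≥ 1
        have hsplit : ∀ u : ℤ → ℝ, (∑ x ∈ Icc (-j'-1) (j'-1), u x)
            = u (-j'-1) + (u (-j') + (∑ x ∈ Icc (-j'+1) (j'-1), u x)) := fun u => by
          rw [sum_Icc_bot u (by omega : -j'-1 ≤ j'-1),
            show -j'-1+1 = -j' by ring, sum_Icc_bot u (by omega : -j' ≤ j'-1)]
        have ihS : (∑ x ∈ Icc (-j'-1) (j'+1), v x) ≤ ∑ x ∈ Icc (-j'-1) (j'+1), w x := by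
          have := ih (j'+1)
          rw [show (-(j'+1):ℤ) = -j'-1 by ring] at this
          exact this
        have ihC : (∑ x ∈ Icc (-j'+1) (j'-1), v x) ≤ ∑ x ∈ Icc (-j'+1) (j'-1), w x := by
          have := ih (j'-1)
          rw [show (-(j'-1):ℤ) = -j'+1 by ring] at this
          exact this
        have idv : Av + Bv = (∑ x ∈ Icc (-j'-1) (j'+1), v x) + (∑ x ∈ Icc (-j'+1) (j'-1), v x) := by
          have h1 := hS2 v; have h2 := hsplit v
          linarith
        have idw : Aw + Bw = (∑ x ∈ Icc (-j'-1) (j'+1), w x) + (∑ x ∈ Icc (-j'+1) (j'-1), w x) := by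
          have h1 := hS2 w; have h2 := hsplit w
          linarith
        rw [idv, idw]
        linarith
    have : (1 - (1:ℝ)/2) = 1/2 := by norm_num
    rw [this]
    linarith

theorem walk_main {p : ℝ} (hp0 : 0 ≤ p) (hp1 : p ≤ 1) (b : ℕ → ℕ) (n : ℕ) (j : ℤ) :
    ∑ x ∈ Icc (-j) j, walk p b n x ≤ ∑ x ∈ Icc (-j) j, walk (1/2) b n x := by
  rcases le_or_gt (1/2 : ℝ) p with h | h
  · exact walk_csum_le h hp1 b n j
  · have h1 : ∑ x ∈ Icc (-j) j, walk p b n x = ∑ x ∈ Icc (-j) j, walk (1-p) b n x := by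
      apply Finset.sum_nbij' (fun x => -x) (fun x => -x)
      all_goals intro x hx
      all_goals simp only [Finset.mem_Icc] at *
      · omega
      · omega
      · ring
      · ring
      · rw [walk_flip p b n (-x), neg_neg]
    rw [h1]
    exact walk_csum_le (by linarith) (by linarith) b n j


lemma stepDist_one (r : ℝ) : stepDist r {1} = ENNReal.ofReal r := by
  simp only [stepDist, Measure.add_apply, Measure.smul_apply, smul_eq_mul,
    Measure.dirac_apply' _ (measurableSet_singleton _)]
  norm_num

lemma stepDist_negone (r : ℝ) : stepDist r {-1} = ENNReal.ofReal (1 - r) := by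
  simp only [stepDist, Measure.add_apply, Measure.smul_apply, smul_eq_mul,
    Measure.dirac_apply' _ (measurableSet_singleton _)]
  norm_num

lemma stepDist_compl (r : ℝ) : stepDist r ({1, -1} : Set ℝ)ᶜ = 0 := by
  have hm : MeasurableSet (({1, -1} : Set ℝ)ᶜ) :=
    (MeasurableSet.insert (measurableSet_singleton _) _).compl
  simp only [stepDist, Measure.add_apply, Measure.smul_apply, smul_eq_mul,
    Measure.dirac_apply' _ hm]
  norm_num

lemma indep_tuple {Ω : Type*} [MeasurableSpace Ω] {μ : Measure Ω}
    (Y : ℕ → Ω → ℝ) (hYmeas : ∀ i, Measurable (Y i))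
    (hYindep : iIndepFun Y μ) (n : ℕ) :
    IndepFun (fun ω (i : Fin (n+1)) => Y i ω) (Y (n+1)) μ := by
  have h := hYindep.indepFun_finset (Finset.range (n+1)) {n+1}
    (by simp [Finset.disjoint_singleton_right]) hYmeas
  have hφ : Measurable (fun (z : (Finset.range (n+1) : Finset ℕ) → ℝ) (i : Fin (n+1)) =>
      z ⟨i.val, Finset.mem_range.mpr i.isLt⟩) :=
    measurable_pi_lambda _ (fun i => measurable_pi_apply _)
  have hψ : Measurable (fun (z : ({n+1} : Finset ℕ) → ℝ) =>
      z ⟨n+1, Finset.mem_singleton_self _⟩) := measurable_pi_apply _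
  exact h.comp hφ hψ



lemma stepDist_other (r : ℝ) (c : ℝ) (h1 : c ≠ 1) (h2 : c ≠ -1) : stepDist r {c} = 0 := by
  simp only [stepDist, Measure.add_apply, Measure.smul_apply, smul_eq_mul,
    Measure.dirac_apply' _ (measurableSet_singleton _)]
  rw [Set.indicator_of_notMem (by simpa using fun h => h1 h.symm),
    Set.indicator_of_notMem (by simpa using fun h => h2 h.symm)]
  simp

section Meas
variable {Ω : Type*} [MeasurableSpace Ω] (μ : Measure Ω) [IsProbabilityMeasure μ]
variable (Y : ℕ → Ω → ℝ)

lemma mass_eq {p : ℝ} (hp0 : 0 ≤ p) (hp1 : p ≤ 1)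
    (hYmeas : ∀ i, Measurable (Y i))
    (hYindep : iIndepFun Y μ)
    (hY0 : Measure.map (Y 0) μ = stepDist (1/2))
    (hYs : ∀ i, Measure.map (Y (i+1)) μ = stepDist p)
    (b : ℕ → ℕ) (m : ℕ) :
    μ {ω | ∀ n, 1 ≤ n → n ≤ m → |∑ i ∈ Finset.range (n + 1), Y i ω| < (b n : ℝ)}
      = ENNReal.ofReal (∑ x ∈ Icc (-((m:ℤ)+1)) ((m:ℤ)+1), walk p b m x) := by
  set U : ℕ → Ω → ℝ := fun n ω => ∑ i ∈ Finset.range (n + 1), Y i ω with hU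
  have hUmeas : ∀ n, Measurable (U n) := fun n => Finset.measurable_sum _ (fun i _ => hYmeas i)
  set En : ℕ → Set Ω := fun n => {ω | ∀ k, 1 ≤ k → k ≤ n → |U k ω| < (b k : ℝ)} with hEn
  have hEnmeas : ∀ n, MeasurableSet (En n) := by
    intro n
    have : En n = ⋂ (k : ℕ) (_ : 1 ≤ k) (_ : k ≤ n), {ω | |U k ω| < (b k : ℝ)} := by
      ext ω; simp [hEn, Set.mem_iInter]
    rw [this]
    exact MeasurableSet.iInter fun k => MeasurableSet.iInter fun _ =>
      MeasurableSet.iInter fun _ => measurableSet_lt ((hUmeas k).abs) measurable_const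
  have hY1 : ∀ i, μ (Y i ⁻¹' {1}) = ENNReal.ofReal (if i = 0 then 1/2 else p) := by
    intro i
    rw [← Measure.map_apply (hYmeas i) (measurableSet_singleton _)]
    match i with
    | 0 => rw [hY0, stepDist_one]; norm_num
    | (j+1) => rw [hYs j, stepDist_one]; simp
  have hYn1 : ∀ i, μ (Y i ⁻¹' {-1}) = ENNReal.ofReal (1 - if i = 0 then 1/2 else p) := by
    intro i
    rw [← Measure.map_apply (hYmeas i) (measurableSet_singleton _)]
    match i with
    | 0 => rw [hY0, stepDist_negone]; norm_num
    | (j+1) => rw [hYs j, stepDist_negone]; simp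
  have hYnull : ∀ i, μ (Y i ⁻¹' ({1, -1} : Set ℝ)ᶜ) = 0 := by
    intro i
    have hm : MeasurableSet (({1, -1} : Set ℝ)ᶜ) :=
      (MeasurableSet.insert (measurableSet_singleton _) _).compl
    rw [← Measure.map_apply (hYmeas i) hm]
    match i with
    | 0 => rw [hY0, stepDist_compl]
    | (j+1) => rw [hYs j, stepDist_compl]
  have sum_eq : ∀ (n k : ℕ), k ≤ n → ∀ ω : Ω, U k ω
      = ∑ i : Fin (n+1), (if (i:ℕ) ≤ k then Y i ω else 0) := by
    intro n k hk ω
    calc U k ω = ∑ i ∈ range (k+1), (if i ≤ k then Y i ω else 0) :=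
          Finset.sum_congr rfl (fun i hi => (if_pos (by simp at hi; omega)).symm)
      _ = ∑ i ∈ range (n+1), (if i ≤ k then Y i ω else 0) :=
          Finset.sum_subset (Finset.range_subset_range.mpr (by omega))
            (fun i _ hni => if_neg (by simp at hni; omega))
      _ = ∑ i : Fin (n+1), (if (i:ℕ) ≤ k then Y i ω else 0) :=
          (Fin.sum_univ_eq_sum_range _ (n+1)).symm
  -- the key induction
  have main : ∀ (n : ℕ) (x : ℤ),
      μ (En n ∩ {ω | U n ω = (x:ℝ)}) = ENNReal.ofReal (walk p b n x) := by
    intro n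
    induction n with
    | zero =>
      intro x
      have hE0 : En 0 = Set.univ := by
        ext ω; simp only [hEn, Set.mem_setOf_eq, Set.mem_univ, iff_true]
        intro k h1 h0; omega
      have hU0 : {ω | U 0 ω = (x:ℝ)} = Y 0 ⁻¹' {(x:ℝ)} := by
        ext ω; simp [hU, Finset.sum_range_one]
      rw [hE0, Set.univ_inter, hU0,
        ← Measure.map_apply (hYmeas 0) (measurableSet_singleton _), hY0]
      rcases eq_or_ne x 1 with rfl | hx1
      · rw [show ((1:ℤ):ℝ) = (1:ℝ) by norm_num, stepDist_one]
        simp only [walk]; norm_num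
      rcases eq_or_ne x (-1) with rfl | hx2
      · rw [show ((-1:ℤ):ℝ) = (-1:ℝ) by norm_num, stepDist_negone]
        simp only [walk]; norm_num
      · rw [stepDist_other _ _ (by exact_mod_cast hx1) (by exact_mod_cast hx2)]
        simp only [walk]
        rw [if_neg (by tauto), ENNReal.ofReal_zero]
    | succ n ihn =>
      intro x
      have hEsucc : En (n+1) = En n ∩ {ω | |U (n+1) ω| < (b (n+1) : ℝ)} := by
        ext ω
        simp only [hEn, Set.mem_setOf_eq, Set.mem_inter_iff]
        constructor
        · intro h; exact ⟨fun k h1 h2 => h k h1 (by omega), h (n+1) (by omega) le_rfl⟩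
        · rintro ⟨h1, h2⟩ k hk1 hk2
          rcases eq_or_lt_of_le hk2 with rfl | hlt
          · exact h2
          · exact h1 k hk1 (by omega)
      by_cases hx : |x| < (b (n+1) : ℤ)
      · -- main case
        have hTset : En (n+1) ∩ {ω | U (n+1) ω = (x:ℝ)}
            = En n ∩ {ω | U (n+1) ω = (x:ℝ)} := by
          rw [hEsucc]
          ext ω
          simp only [Set.mem_inter_iff, Set.mem_setOf_eq]
          constructor
          · rintro ⟨⟨h1, _⟩, h3⟩; exact ⟨h1, h3⟩
          · rintro ⟨h1, h3⟩
            refine ⟨⟨h1, ?_⟩, h3⟩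
            rw [h3]
            have : |(x:ℝ)| = ((|x| : ℤ) : ℝ) := by push_cast; rfl
            rw [this]
            exact_mod_cast hx
        rw [hTset]
        set A := En n ∩ {ω | U (n+1) ω = (x:ℝ)} with hA
        have hAmeas : MeasurableSet A :=
          (hEnmeas n).inter (measurableSet_eq_fun (hUmeas (n+1)) measurable_const)
        set V := Y (n+1) ⁻¹' ({1, -1} : Set ℝ) with hV
        have hVmeas : MeasurableSet V :=
          (hYmeas (n+1)) (MeasurableSet.insert (measurableSet_singleton _) _)
        have hsplit : μ A = μ (A ∩ V) := by
          have h1 := measure_inter_add_diff A hVmeas (μ := μ)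
          have h2 : μ (A \ V) = 0 :=
            measure_mono_null (fun ω hω => hω.2) (hYnull (n+1))
          rw [← h1, h2, add_zero]
        have hUs : ∀ ω, U (n+1) ω = U n ω + Y (n+1) ω := fun ω =>
          Finset.sum_range_succ _ _
        have hAV : A ∩ V = (En n ∩ {ω | U n ω = ((x-1:ℤ):ℝ)} ∩ Y (n+1) ⁻¹' {1})
            ∪ (En n ∩ {ω | U n ω = ((x+1:ℤ):ℝ)} ∩ Y (n+1) ⁻¹' {-1}) := by
          ext ω
          simp only [Set.mem_inter_iff, Set.mem_union, Set.mem_setOf_eq, Set.mem_preimage,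
            Set.mem_insert_iff, Set.mem_singleton_iff, hA]
          constructor
          · rintro ⟨⟨h1, h2⟩, h3 | h3⟩
            · left; refine ⟨⟨h1, ?_⟩, h3⟩
              have := hUs ω; rw [h3] at this; push_cast; linarith [h2, this]
            · right; refine ⟨⟨h1, ?_⟩, h3⟩
              have := hUs ω; rw [h3] at this; push_cast; linarith [h2, this]
          · rintro (⟨⟨h1, h2⟩, h3⟩ | ⟨⟨h1, h2⟩, h3⟩)
            · refine ⟨⟨h1, ?_⟩, Or.inl h3⟩
              have := hUs ω; rw [h3, h2] at this; push_cast at this ⊢; linarith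
            · refine ⟨⟨h1, ?_⟩, Or.inr h3⟩
              have := hUs ω; rw [h3, h2] at this; push_cast at this ⊢; linarith
        -- product rule
        have hprod : ∀ (y : ℤ) (c : ℝ),
            μ (En n ∩ {ω | U n ω = (y:ℝ)} ∩ Y (n+1) ⁻¹' {c})
              = μ (En n ∩ {ω | U n ω = (y:ℝ)}) * μ (Y (n+1) ⁻¹' {c}) := by
          intro y c
          have hindep := indep_tuple Y hYmeas hYindep n
          set Bset : Set (Fin (n+1) → ℝ) :=
            {z | (∀ k, 1 ≤ k → k ≤ n →
                |∑ i : Fin (n+1), (if (i:ℕ) ≤ k then z i else 0)| < (b k : ℝ)) ∧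
              (∑ i : Fin (n+1), (if (i:ℕ) ≤ n then z i else 0)) = (y:ℝ)} with hBset
          have hBmeas : MeasurableSet Bset := by
            have hs : ∀ k, Measurable (fun z : Fin (n+1) → ℝ =>
                ∑ i : Fin (n+1), (if (i:ℕ) ≤ k then z i else 0)) := by
              intro k
              apply Finset.measurable_sum
              intro i _
              by_cases h : (i:ℕ) ≤ k
              · simpa [h] using measurable_pi_apply i
              · simpa [h] using measurable_const
            have h1 : MeasurableSet {z : Fin (n+1) → ℝ | ∀ k, 1 ≤ k → k ≤ n →
                |∑ i : Fin (n+1), (if (i:ℕ) ≤ k then z i else 0)| < (b k : ℝ)} := by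
              have : {z : Fin (n+1) → ℝ | ∀ k, 1 ≤ k → k ≤ n →
                  |∑ i : Fin (n+1), (if (i:ℕ) ≤ k then z i else 0)| < (b k : ℝ)}
                  = ⋂ (k : ℕ) (_ : 1 ≤ k) (_ : k ≤ n),
                    {z | |∑ i : Fin (n+1), (if (i:ℕ) ≤ k then z i else 0)| < (b k : ℝ)} := by
                ext z; simp [Set.mem_iInter]
              rw [this]
              exact MeasurableSet.iInter fun k => MeasurableSet.iInter fun _ =>
                MeasurableSet.iInter fun _ => measurableSet_lt ((hs k).abs) measurable_const
            have h2 : MeasurableSet {z : Fin (n+1) → ℝ |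
                (∑ i : Fin (n+1), (if (i:ℕ) ≤ n then z i else 0)) = (y:ℝ)} :=
              measurableSet_eq_fun (hs n) measurable_const
            exact h1.inter h2
          have hpre : En n ∩ {ω | U n ω = (y:ℝ)}
              = (fun ω (i : Fin (n+1)) => Y i ω) ⁻¹' Bset := by
            ext ω
            simp only [Set.mem_inter_iff, Set.mem_setOf_eq, Set.mem_preimage, hEn, hBset]
            constructor
            · rintro ⟨h1, h2⟩
              exact ⟨fun k hk1 hk2 => by rw [← sum_eq n k hk2 ω]; exact h1 k hk1 hk2,
                by rw [← sum_eq n n le_rfl ω]; exact h2⟩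
            · rintro ⟨h1, h2⟩
              exact ⟨fun k hk1 hk2 => by rw [sum_eq n k hk2 ω]; exact h1 k hk1 hk2,
                by rw [sum_eq n n le_rfl ω]; exact h2⟩
          rw [hpre, show Y (n+1) ⁻¹' {c} = (fun ω => Y (n+1) ω) ⁻¹' {c} from rfl]
          exact hindep.measure_inter_preimage_eq_mul Bset {c} hBmeas
            (measurableSet_singleton c)
        -- assemble
        have hdisj : Disjoint (En n ∩ {ω | U n ω = ((x-1:ℤ):ℝ)} ∩ Y (n+1) ⁻¹' {1})
            (En n ∩ {ω | U n ω = ((x+1:ℤ):ℝ)} ∩ Y (n+1) ⁻¹' {-1}) := by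
          apply Set.disjoint_left.mpr
          rintro ω ⟨_, h1⟩ ⟨_, h2⟩
          simp only [Set.mem_preimage, Set.mem_singleton_iff] at h1 h2
          rw [h1] at h2; norm_num at h2
        have hmeas2 : MeasurableSet (En n ∩ {ω | U n ω = ((x+1:ℤ):ℝ)} ∩ Y (n+1) ⁻¹' {-1}) :=
          ((hEnmeas n).inter (measurableSet_eq_fun (hUmeas n) measurable_const)).inter
            ((hYmeas (n+1)) (measurableSet_singleton _))
        rw [hsplit, hAV, measure_union hdisj hmeas2, hprod, hprod, ihn, ihn,
          hY1 (n+1), hYn1 (n+1)]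
        simp only [Nat.succ_ne_zero, if_false]
        rw [← ENNReal.ofReal_mul (walk_nonneg hp0 hp1 b n (x-1)),
          ← ENNReal.ofReal_mul (walk_nonneg hp0 hp1 b n (x+1)),
          ← ENNReal.ofReal_add (by nlinarith [walk_nonneg hp0 hp1 b n (x-1)])
            (by nlinarith [walk_nonneg hp0 hp1 b n (x+1)])]
        congr 1
        simp only [walk]
        rw [if_pos hx]
        ring
      · -- truncated case
        have hempty : En (n+1) ∩ {ω | U (n+1) ω = (x:ℝ)} = ∅ := by
          ext ω
          simp only [hEsucc, Set.mem_inter_iff, Set.mem_setOf_eq, Set.mem_empty_iff_false,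
            iff_false, not_and]
          rintro ⟨h1, h2⟩ h3
          rw [h3] at h2
          have : |(x:ℝ)| = ((|x| : ℤ) : ℝ) := by push_cast; rfl
          rw [this] at h2
          exact hx (by exact_mod_cast h2)
        rw [hempty]
        simp only [walk, if_neg hx, measure_empty, ENNReal.ofReal_zero]
  -- final summation over x
  have hUs' : ∀ n ω, U (n+1) ω = U n ω + Y (n+1) ω := fun n ω => Finset.sum_range_succ _ _
  have exist_int : ∀ ω, (∀ i, i ≤ m → (Y i ω = 1 ∨ Y i ω = -1)) →
      ∃ x : ℤ, x ∈ Icc (-((m:ℤ)+1)) ((m:ℤ)+1) ∧ U m ω = (x:ℝ) := by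
    intro ω h
    have key : ∀ n, n ≤ m → ∃ x : ℤ, |x| ≤ (n:ℤ)+1 ∧ U n ω = (x:ℝ) := by
      intro n
      induction n with
      | zero =>
        intro _
        rcases h 0 (by omega) with h0 | h0
        · exact ⟨1, by norm_num, by simp [hU, Finset.sum_range_one, h0]⟩
        · exact ⟨-1, by norm_num, by simp [hU, Finset.sum_range_one, h0]⟩
      | succ n ih =>
        intro hnm
        obtain ⟨x, hx1, hx2⟩ := ih (by omega)
        rcases h (n+1) hnm with h0 | h0
        · refine ⟨x+1, by rw [abs_le] at hx1 ⊢; push_cast; omega, ?_⟩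
          rw [hUs' n ω, hx2, h0]; push_cast; ring
        · refine ⟨x-1, by rw [abs_le] at hx1 ⊢; push_cast; omega, ?_⟩
          rw [hUs' n ω, hx2, h0]; push_cast; ring
    obtain ⟨x, h1, h2⟩ := key m le_rfl
    refine ⟨x, ?_, h2⟩
    simp only [Finset.mem_Icc]
    rw [abs_le] at h1
    omega
  set I := Icc (-((m:ℤ)+1)) ((m:ℤ)+1) with hI
  set W := ⋃ x ∈ (I : Finset ℤ), {ω | U m ω = (x:ℝ)} with hW
  have hWmeas : MeasurableSet W := by
    apply MeasurableSet.biUnion (Set.to_countable _)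
    intro x _
    exact measurableSet_eq_fun (hUmeas m) measurable_const
  have hnull2 : μ (⋃ i ∈ Finset.range (m+1), Y i ⁻¹' ({1, -1} : Set ℝ)ᶜ) = 0 := by
    refine le_antisymm ?_ zero_le
    calc μ (⋃ i ∈ Finset.range (m+1), Y i ⁻¹' ({1, -1} : Set ℝ)ᶜ)
        ≤ ∑ i ∈ Finset.range (m+1), μ (Y i ⁻¹' ({1, -1} : Set ℝ)ᶜ) :=
          measure_biUnion_finset_le _ _
      _ = 0 := Finset.sum_eq_zero (fun i _ => hYnull i)
  have hgoal : {ω | ∀ n, 1 ≤ n → n ≤ m → |∑ i ∈ Finset.range (n + 1), Y i ω| < (b n : ℝ)}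
      = En m := rfl
  rw [hgoal]
  have hdiff : μ (En m \ W) = 0 := by
    apply measure_mono_null _ hnull2
    intro ω hω
    simp only [Set.mem_diff, hW, Set.mem_iUnion, Set.mem_setOf_eq, not_exists] at hω
    simp only [Set.mem_iUnion, Set.mem_preimage, Set.mem_compl_iff, Set.mem_insert_iff,
      Set.mem_singleton_iff, exists_prop]
    by_contra hc
    push_neg at hc
    obtain ⟨x, hx1, hx2⟩ := exist_int ω (fun i hi => by
      have := hc i (Finset.mem_range.mpr (by omega))
      tauto)
    exact hω.2 x hx1 hx2
  have hsum : μ (En m) = ∑ x ∈ I, μ (En m ∩ {ω | U m ω = (x:ℝ)}) := by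
    have h1 := measure_inter_add_diff (En m) hWmeas (μ := μ)
    have h2 : En m ∩ W = ⋃ x ∈ (I : Finset ℤ), (En m ∩ {ω | U m ω = (x:ℝ)}) := by
      rw [hW, Set.inter_iUnion₂]
    have h3 : μ (⋃ x ∈ (I : Finset ℤ), (En m ∩ {ω | U m ω = (x:ℝ)}))
        = ∑ x ∈ I, μ (En m ∩ {ω | U m ω = (x:ℝ)}) := by
      apply measure_biUnion_finset
      · intro x _ y _ hxy
        apply Set.disjoint_left.mpr
        rintro ω ⟨_, h4⟩ ⟨_, h5⟩
        simp only [Set.mem_setOf_eq] at h4 h5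
        rw [h4] at h5
        exact hxy (by exact_mod_cast h5)
      · intro x _
        exact (hEnmeas m).inter (measurableSet_eq_fun (hUmeas m) measurable_const)
    rw [← h1, hdiff, add_zero, h2, h3]
  rw [hsum]
  rw [Finset.sum_congr rfl (fun x _ => main m x)]
  rw [← ENNReal.ofReal_sum_of_nonneg (fun x _ => walk_nonneg hp0 hp1 b m x)]
end Meas

end WalkAux

/-- **Corollary 2.** Consider the walk `U^p_n = X_0 + S^p_n` with random initial state
`X_0 = ±1` with equal probabilities, independent of the increments (modelled by `Y 0 = X_0`
with `Y 0 ~ stepDist (1/2)`, increments `Y (i+1) ~ stepDist p`, all independent, and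
`U^p_n = ∑_{i ≤ n} Y i`).  For non-negative integer boundaries `b_n`, the stopping time
`T̂^p = inf{n ≥ 1 : |U^p_n| ≥ b_n}` is stochastically maximized over `p ∈ [0,1]` by
`p = 1/2`: for every `p ∈ [0,1]` and every `m ≥ 1`, `P(T̂^p > m) ≤ P(T̂^{1/2} > m)`,
where `{T̂^p > m} = {|U^p_n| < b_n for all 1 ≤ n ≤ m}`. -/
theorem initial_state_walk_stopping_time_maximized_at_half
    {Ω' Ω : Type*} [MeasurableSpace Ω'] [MeasurableSpace Ω]
    (μ' : Measure Ω') (μ : Measure Ω)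
    [IsProbabilityMeasure μ'] [IsProbabilityMeasure μ]
    (p : ℝ) (hp : p ∈ Set.Icc (0 : ℝ) 1)
    (Y' : ℕ → Ω' → ℝ) (Y : ℕ → Ω → ℝ)
    (hY'meas : ∀ i, Measurable (Y' i)) (hYmeas : ∀ i, Measurable (Y i))
    (hY'indep : iIndepFun Y' μ')
    (hYindep : iIndepFun Y μ)
    (hY'0dist : Measure.map (Y' 0) μ' = stepDist (1/2))
    (hY0dist : Measure.map (Y 0) μ = stepDist (1/2))
    (hY'dist : ∀ i, Measure.map (Y' (i + 1)) μ' = stepDist (1/2))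
    (hYdist : ∀ i, Measure.map (Y (i + 1)) μ = stepDist p)
    (b : ℕ → ℕ) (m : ℕ) (hm : 1 ≤ m) :
    μ {ω | ∀ n, 1 ≤ n → n ≤ m → |∑ i ∈ Finset.range (n + 1), Y i ω| < (b n : ℝ)}
      ≤ μ' {ω | ∀ n, 1 ≤ n → n ≤ m → |∑ i ∈ Finset.range (n + 1), Y' i ω| < (b n : ℝ)} := by
  rw [WalkAux.mass_eq μ Y hp.1 hp.2 hYmeas hYindep hY0dist hYdist b m,
      WalkAux.mass_eq μ' Y' (p := 1/2) (by norm_num) (by norm_num) hY'meas hY'indep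
        hY'0dist hY'dist b m]
  exact ENNReal.ofReal_le_ofReal (WalkAux.walk_main hp.1 hp.2 b m ((m:ℤ)+1))
end
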